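/- arXiv:0710.2081 — 5 statements merged into one kernel-verified Lean document; each statement's English description precedes it below -/
import Mathlib

section
/- Every element x of the semigroup Σ_n^G of ordered G-partitions of [n] satisfies x^{|G|+1} = x. -/
/-- An (unvalidated) ordered `G`-partition of `[n]`: a list of pairs (block, group label). -/
abbrev OGP (n : ℕ) (G : Type*) := List (Finset (Fin n) × G)

/-- Multiplication of ordered `G`-partitions: the pairs `(B_i ∩ C_j, h_j * g_i)` in
lexicographic order of `(i, j)`, omitting those with empty intersection. -/
def mulOGP {n : ℕ} {G : Type*} [Mul G] (P Q : OGP n G) : OGP n G :=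
  P.flatMap fun bg => Q.filterMap fun ch =>
    if (bg.1 ∩ ch.1).Nonempty then some (bg.1 ∩ ch.1, ch.2 * bg.2) else none

/-- `P` is an ordered `G`-partition of `[n]`: blocks nonempty, pairwise disjoint, union `[n]`. -/
def IsOGP {n : ℕ} {G : Type*} (P : OGP n G) : Prop :=
  (∀ p ∈ P, p.1.Nonempty) ∧ P.Pairwise (fun p q => Disjoint p.1 q.1) ∧
    P.foldr (fun p s => p.1 ∪ s) ∅ = Finset.univ

/-- `k`-th power in `Σ_n^G` (with the empty product being the identity `(([n], e))`). -/
def powOGP {n : ℕ} {G : Type*} [Monoid G] (x : OGP n G) : ℕ → OGP n G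
  | 0 => [(Finset.univ, (1 : G))]
  | k + 1 => mulOGP x (powOGP x k)

private lemma flatMap_singleton_eq_map {α β : Type*} (F : α → List β) (g : α → β) :
    ∀ (l : List α), (∀ a ∈ l, F a = [g a]) → l.flatMap F = l.map g := by
  intro l
  induction l with
  | nil => intro _; simp
  | cons a t ih =>
    intro h
    simp only [List.flatMap_cons, List.map_cons, h a List.mem_cons_self,
      ih (fun b hb => h b (List.mem_cons_of_mem a hb))]
    rfl

private lemma inner_filterMap {n : ℕ} {G : Type*} [Monoid G] (f : G → G)
    (bg : Finset (Fin n) × G) :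
    ∀ (l : OGP n G), (∀ p ∈ l, p.1.Nonempty) →
      l.Pairwise (fun p q => Disjoint p.1 q.1) → bg ∈ l →
      (l.filterMap fun p =>
        if (bg.1 ∩ p.1).Nonempty then some (bg.1 ∩ p.1, f p.2 * bg.2) else none)
        = [(bg.1, f bg.2 * bg.2)] := by
  intro l
  induction l with
  | nil => intro _ _ h; simp at h
  | cons q t ih =>
    intro hne hpw hmem
    rw [List.pairwise_cons] at hpw
    rcases List.mem_cons.1 hmem with rfl | hmem'
    · -- bg is the head
      have hbg : bg.1.Nonempty := hne bg List.mem_cons_self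
      rw [List.filterMap_cons]
      rw [if_pos (by simpa [Finset.inter_self] using hbg)]
      have htail : (t.filterMap fun p =>
          if (bg.1 ∩ p.1).Nonempty then some (bg.1 ∩ p.1, f p.2 * bg.2) else none) = [] := by
        rw [List.filterMap_eq_nil_iff]
        intro p hp
        have hd : Disjoint bg.1 p.1 := hpw.1 p hp
        rw [if_neg]
        simp [Finset.not_nonempty_iff_eq_empty, Finset.disjoint_iff_inter_eq_empty.1 hd]
      rw [htail]
      simp [Finset.inter_self]
    · -- bg is in the tail
      rw [List.filterMap_cons]
      have hd : Disjoint bg.1 q.1 := (hpw.1 bg hmem').symm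
      rw [if_neg (by
        simp [Finset.not_nonempty_iff_eq_empty, Finset.disjoint_iff_inter_eq_empty.1 hd])]
      exact ih (fun p hp => hne p (List.mem_cons_of_mem q hp)) hpw.2 hmem'

private lemma mul_map {n : ℕ} {G : Type*} [Monoid G] (f : G → G) (x : OGP n G)
    (hne : ∀ p ∈ x, p.1.Nonempty) (hpw : x.Pairwise (fun p q => Disjoint p.1 q.1)) :
    mulOGP x (x.map fun p => (p.1, f p.2)) = x.map fun p => (p.1, f p.2 * p.2) := by
  unfold mulOGP
  apply flatMap_singleton_eq_map
  intro bg hbg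
  rw [List.filterMap_map]
  have := inner_filterMap f bg x hne hpw hbg
  convert this using 2
  rfl

private lemma pow_map {n : ℕ} {G : Type*} [Group G] (x : OGP n G)
    (hne : ∀ p ∈ x, p.1.Nonempty) (hpw : x.Pairwise (fun p q => Disjoint p.1 q.1)) :
    ∀ k, powOGP x (k + 1) = x.map fun p => (p.1, p.2 ^ (k + 1)) := by
  intro k
  induction k with
  | zero =>
    show mulOGP x [(Finset.univ, (1 : G))] = _
    unfold mulOGP
    apply flatMap_singleton_eq_map
    intro bg hbg
    have hbgne : bg.1.Nonempty := hne bg hbg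
    simp [List.filterMap_cons, Finset.inter_univ, hbgne]
  | succ k ih =>
    show mulOGP x (powOGP x (k + 1)) = _
    rw [ih, mul_map (fun g => g ^ (k + 1)) x hne hpw]
    apply List.map_congr_left
    intro p _
    simp [pow_succ]

/-- every `x ∈ Σ_n^G` satisfies `x^{|G|+1} = x`. -/
theorem powOGP_card_add_one {n : ℕ} {G : Type*} [Group G] [Fintype G]
    (x : OGP n G) (hx : IsOGP x) :
    powOGP x (Fintype.card G + 1) = x := by
  obtain ⟨hne, hpw, -⟩ := hx
  rw [pow_map x hne hpw]
  have : ∀ p ∈ x, (fun p : Finset (Fin n) × G => (p.1, p.2 ^ (Fintype.card G + 1))) p = id p := by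
    intro p _
    simp [pow_succ, pow_card_eq_one]
  rw [List.map_congr_left this, List.map_id]
end

section
/- An element of the semigroup Σ_n^G of ordered G-partitions of [n] is idempotent if and only if all of its group labels equal the identity element e of G. -/
lemma filterMap_eq_singleton {α β : Type*} (f : α → Option β) (l : List α) (a : α) (b : β)
    (ha : a ∈ l) (hnd : l.Nodup) (hfa : f a = some b)
    (h0 : ∀ c ∈ l, c ≠ a → f c = none) : l.filterMap f = [b] := by
  induction l with
  | nil => simp at ha
  | cons x t ih =>
    rcases List.mem_cons.1 ha with rfl | ha'
    · have ht : ∀ c ∈ t, f c = none := by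
        intro c hc
        exact h0 c (List.mem_cons_of_mem _ hc) (by rintro rfl; exact (List.nodup_cons.1 hnd).1 hc)
      have h2 : t.filterMap f = [] := by
        rw [List.filterMap_eq_nil_iff]; intro c hc; rw [ht c hc]
      simp [List.filterMap_cons, hfa, h2]
    · have hx : f x = none := h0 x List.mem_cons_self
        (by rintro rfl; exact (List.nodup_cons.1 hnd).1 ha')
      rw [List.filterMap_cons, hx]
      exact ih ha' (List.nodup_cons.1 hnd).2
        (fun c hc hca => h0 c (List.mem_cons_of_mem _ hc) hca)

lemma flatMap_congr' {α β : Type*} (l : List α) (f g : α → List β)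
    (h : ∀ a ∈ l, f a = g a) : l.flatMap f = l.flatMap g := by
  induction l with
  | nil => rfl
  | cons x t ih =>
    simp only [List.flatMap_cons, h x List.mem_cons_self,
      ih (fun a ha => h a (List.mem_cons_of_mem _ ha))]

lemma flatMap_singleton' {α β : Type*} (l : List α) (g : α → β) :
    l.flatMap (fun a => [g a]) = l.map g := by
  induction l with
  | nil => rfl
  | cons x t ih => simp [List.flatMap_cons, ih]

lemma map_eq_self' {α : Type*} (l : List α) (f : α → α) :
    l.map f = l ↔ ∀ a ∈ l, f a = a := by
  induction l with
  | nil => simp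
  | cons x t ih => simp [ih]

/-- an element of `Σ_n^G` is idempotent iff all its group labels are `e`. -/
theorem isIdempotent_iff_labels_one {n : ℕ} {G : Type*} [Group G]
    (x : OGP n G) (hx : IsOGP x) :
    mulOGP x x = x ↔ ∀ p ∈ x, p.2 = (1 : G) := by
  obtain ⟨hne, hpw, -⟩ := hx
  have hsym : Symmetric (fun p q : Finset (Fin n) × G => Disjoint p.1 q.1) :=
    fun p q h => h.symm
  have hall : ∀ p ∈ x, ∀ q ∈ x, p ≠ q → Disjoint p.1 q.1 :=
    fun p hp q hq hne' => by
      haveI : Std.Symm (fun p q : Finset (Fin n) × G => Disjoint p.1 q.1) := ⟨fun a b h => hsym h⟩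
      exact hpw.forall hp hq hne'
  have hnd : x.Nodup := by
    refine List.Pairwise.imp_of_mem ?_ hpw
    intro p q hp hq hd heq
    subst heq
    exact (hne p hp).ne_empty (by simpa using disjoint_self.1 hd)
  have key : mulOGP x x = x.map (fun p => (p.1, p.2 * p.2)) := by
    unfold mulOGP
    rw [flatMap_congr' x _ (fun p => [(p.1, p.2 * p.2)]) ?_, flatMap_singleton']
    intro bg hbg
    refine filterMap_eq_singleton _ _ bg _ hbg hnd ?_ ?_
    · simp [Finset.inter_self, hne bg hbg]
    · intro c hc hcb
      have hd : Disjoint bg.1 c.1 := hall bg hbg c hc (Ne.symm hcb)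
      simp [Finset.not_nonempty_iff_eq_empty.2
        (by simpa [Finset.disjoint_iff_inter_eq_empty] using hd)]
  rw [key, map_eq_self']
  constructor
  · intro h p hp
    have h2 : p.2 * p.2 = p.2 := congrArg Prod.snd (h p hp)
    exact mul_eq_right.mp h2
  · intro h p hp
    rw [Prod.ext_iff]
    exact ⟨rfl, by rw [h p hp]; simp⟩
end

section
/- The idempotent elements of Σ_n^G form a subsemigroup which is a left regular band: every idempotent x satisfies x² = x, and for all idempotents x, y one has x·y·x = x·y. -/
section Aux

variable {n : ℕ} {G : Type*}

lemma aux_filterMap_eq_singleton {α β : Type*} (f : α → Option β) (l : List α) (a : α) (b : β)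
    (hl : l.Nodup) (ha : a ∈ l) (hfa : f a = some b)
    (hrest : ∀ c ∈ l, c ≠ a → f c = none) :
    l.filterMap f = [b] := by
  induction l with
  | nil => simp at ha
  | cons c t ih =>
    rcases List.mem_cons.1 ha with rfl | hat
    · rw [List.filterMap_cons, hfa]
      have ht : t.filterMap f = [] := List.filterMap_eq_nil_iff.2 fun d hd =>
        hrest d (List.mem_cons_of_mem _ hd)
          (fun h => (List.nodup_cons.1 hl).1 (h ▸ hd))
      simp [ht]
    · have hc : f c = none := by
        refine hrest c List.mem_cons_self fun h => ?_
        exact (List.nodup_cons.1 hl).1 (h ▸ hat)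
      rw [List.filterMap_cons, hc]
      exact ih (List.nodup_cons.1 hl).2 hat
        (fun d hd hda => hrest d (List.mem_cons_of_mem _ hd) hda)

lemma aux_disjoint_symm : Symmetric (fun p q : Finset (Fin n) × G => Disjoint p.1 q.1) :=
  fun _ _ h => h.symm

lemma aux_nodup {P : OGP n G} (h : IsOGP P) : P.Nodup := by
  refine (List.Pairwise.imp_of_mem ?_ h.2.1)
  intro p q hp _ hd
  intro hpq
  subst hpq
  rcases h.1 p hp with ⟨a, ha⟩
  rw [disjoint_self] at hd
  simp [hd] at ha

lemma aux_pairwise_forall {P : OGP n G} (h : IsOGP P) :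
    ∀ p ∈ P, ∀ q ∈ P, p ≠ q → Disjoint p.1 q.1 :=
  fun _ hp _ hq hne => (haveI : Std.Symm (fun p q : Finset (Fin n) × G => Disjoint p.1 q.1) :=
    ⟨fun _ _ h => aux_disjoint_symm h⟩; List.Pairwise.forall h.2.1) hp hq hne

/-- If `D` is a nonempty subset of the block of `B ∈ x`, the row of the product indexed by `D`
is the singleton `[(D, B.2 * g)]`. -/
lemma aux_filterMap_inter [Mul G] {x : OGP n G} (hx : IsOGP x)
    {D : Finset (Fin n)} (hD : D.Nonempty) {B : Finset (Fin n) × G} (hB : B ∈ x)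
    (hDB : D ⊆ B.1) (g : G) :
    (x.filterMap fun ch =>
      if (D ∩ ch.1).Nonempty then some (D ∩ ch.1, ch.2 * g) else none) = [(D, B.2 * g)] := by
  have hDB' : D ∩ B.1 = D := Finset.inter_eq_left.2 hDB
  refine aux_filterMap_eq_singleton _ _ B _ (aux_nodup hx) hB ?_ ?_
  · rw [hDB', if_pos hD]
  · intro c hc hcB
    have hdis : Disjoint B.1 c.1 := aux_pairwise_forall hx B hB c hc (fun h => hcB h.symm)
    have : D ∩ c.1 = ∅ := by
      apply Finset.eq_empty_of_forall_notMem
      intro a ha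
      rcases Finset.mem_inter.1 ha with ⟨ha1, ha2⟩
      exact (Finset.disjoint_left.1 hdis) (hDB ha1) ha2
    rw [this, if_neg (by simp)]

lemma aux_flatMap_singleton_map {α β : Type*} (l : List α) (f : α → β) :
    (l.flatMap fun a => [f a]) = l.map f := by
  induction l with
  | nil => rfl
  | cons c t ih => simp [List.flatMap_cons, ih]

lemma aux_mulOGP_self [Mul G] {x : OGP n G} (hx : IsOGP x) :
    mulOGP x x = x.map fun p => (p.1, p.2 * p.2) := by
  rw [mulOGP]
  rw [List.flatMap_congr (g := fun bg => [(bg.1, bg.2 * bg.2)])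
    (fun bg hbg => aux_filterMap_inter hx (hx.1 bg hbg) hbg (subset_refl _) bg.2)]
  exact aux_flatMap_singleton_map x _

lemma aux_map_eq_self {α : Type*} {f : α → α} {l : List α} (h : l.map f = l) :
    ∀ a ∈ l, f a = a := by
  induction l with
  | nil => simp
  | cons c t ih =>
    simp only [List.map_cons, List.cons.injEq] at h
    intro a ha
    rcases List.mem_cons.1 ha with rfl | ha
    · exact h.1
    · exact ih h.2 a ha

/-- Decomposition of members of a product row. -/
lemma aux_mem_row [Mul G] {y : OGP n G} {B : Finset (Fin n)} {g : G}
    {p : Finset (Fin n) × G}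
    (hp : p ∈ y.filterMap fun ch =>
      if (B ∩ ch.1).Nonempty then some (B ∩ ch.1, ch.2 * g) else none) :
    ∃ ch ∈ y, p = (B ∩ ch.1, ch.2 * g) ∧ (B ∩ ch.1).Nonempty := by
  rcases List.mem_filterMap.1 hp with ⟨ch, hch, h⟩
  by_cases hne : (B ∩ ch.1).Nonempty
  · rw [if_pos hne, Option.some_inj] at h
    exact ⟨ch, hch, h.symm, hne⟩
  · rw [if_neg hne] at h
    cases h

/-- Decomposition of members of a product. -/
lemma aux_mem_mul [Mul G] {x y : OGP n G} {p : Finset (Fin n) × G}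
    (hp : p ∈ mulOGP x y) :
    ∃ bg ∈ x, ∃ ch ∈ y, p = (bg.1 ∩ ch.1, ch.2 * bg.2) ∧ (bg.1 ∩ ch.1).Nonempty := by
  rcases List.mem_flatMap.1 hp with ⟨bg, hbg, hp'⟩
  rcases aux_mem_row hp' with ⟨ch, hch, h1, h2⟩
  exact ⟨bg, hbg, ch, hch, h1, h2⟩

lemma aux_foldr_union_append (l₁ l₂ : OGP n G) :
    (l₁ ++ l₂).foldr (fun p s => p.1 ∪ s) ∅ =
      l₁.foldr (fun p s => p.1 ∪ s) ∅ ∪ l₂.foldr (fun p s => p.1 ∪ s) ∅ := by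
  induction l₁ with
  | nil => simp
  | cons c t ih => simp [ih, Finset.union_assoc]

lemma aux_foldr_union_flatMap (l : OGP n G) (f : Finset (Fin n) × G → OGP n G) :
    (l.flatMap f).foldr (fun p s => p.1 ∪ s) ∅ =
      l.foldr (fun p s => (f p).foldr (fun q t => q.1 ∪ t) ∅ ∪ s) ∅ := by
  induction l with
  | nil => rfl
  | cons c t ih =>
    rw [List.flatMap_cons, aux_foldr_union_append, ih]
    rfl

lemma aux_foldr_union_row [Mul G] (y : OGP n G) (B : Finset (Fin n)) (g : G) :
    ((y.filterMap fun ch =>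
      if (B ∩ ch.1).Nonempty then some (B ∩ ch.1, ch.2 * g) else none).foldr
        (fun p s => p.1 ∪ s) ∅) = B ∩ y.foldr (fun p s => p.1 ∪ s) ∅ := by
  induction y with
  | nil => simp
  | cons c t ih =>
    rw [List.filterMap_cons]
    by_cases hne : (B ∩ c.1).Nonempty
    · rw [if_pos hne]
      simp only [List.foldr_cons, ih]
      rw [Finset.inter_union_distrib_left]
    · rw [if_neg hne]
      rw [ih]
      have : B ∩ c.1 = ∅ := Finset.not_nonempty_iff_eq_empty.1 hne
      simp only [List.foldr_cons, Finset.inter_union_distrib_left, this, Finset.empty_union]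

/-- The product of two ordered `G`-partitions is an ordered `G`-partition. -/
lemma aux_mulOGP_isOGP [Mul G] {x y : OGP n G} (hx : IsOGP x) (hy : IsOGP y) :
    IsOGP (mulOGP x y) := by
  refine ⟨?_, ?_, ?_⟩
  · intro p hp
    rcases aux_mem_mul hp with ⟨bg, _, ch, _, h1, h2⟩
    rw [h1]; exact h2
  · rw [mulOGP, List.flatMap_def, List.pairwise_flatten]
    constructor
    · intro l' hl'
      rcases List.mem_map.1 hl' with ⟨bg, _, rfl⟩
      rw [List.pairwise_filterMap]
      refine hy.2.1.imp_of_mem ?_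
      intro c c' hc hc' hd
      intro b hb b' hb'
      have hb1 : b.1 ⊆ c.1 := by
        by_cases h : (bg.1 ∩ c.1).Nonempty
        · rw [if_pos h, Option.some_inj] at hb
          rw [← hb]; exact Finset.inter_subset_right
        · rw [if_neg h] at hb; cases hb
      have hb2 : b'.1 ⊆ c'.1 := by
        by_cases h : (bg.1 ∩ c'.1).Nonempty
        · rw [if_pos h, Option.some_inj] at hb'
          rw [← hb']; exact Finset.inter_subset_right
        · rw [if_neg h] at hb'; cases hb'
      exact hd.mono hb1 hb2
    · rw [List.pairwise_map]
      refine hx.2.1.imp_of_mem ?_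
      intro bg bg' _ _ hd p hp q hq
      rcases aux_mem_row hp with ⟨c, _, rfl, _⟩
      rcases aux_mem_row hq with ⟨c', _, rfl, _⟩
      exact hd.mono Finset.inter_subset_left Finset.inter_subset_left
  · rw [mulOGP, aux_foldr_union_flatMap]
    have hfun : (fun (p : Finset (Fin n) × G) s =>
        ((y.filterMap fun ch =>
          if (p.1 ∩ ch.1).Nonempty then some (p.1 ∩ ch.1, ch.2 * p.2) else none).foldr
            (fun q t => q.1 ∪ t) ∅) ∪ s) = fun p s => p.1 ∪ s := by
      funext p s
      rw [aux_foldr_union_row, hy.2.2, Finset.inter_univ]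
    rw [hfun]
    exact hx.2.2

/-- All labels of an idempotent are the identity. -/
lemma aux_labels_one {G : Type*} [Group G] {x : OGP n G} (hx : IsOGP x)
    (hx2 : mulOGP x x = x) : ∀ p ∈ x, p.2 = 1 := by
  intro p hp
  have h := aux_map_eq_self (l := x) (f := fun p => (p.1, p.2 * p.2))
    (by rw [← aux_mulOGP_self hx, hx2]) p hp
  have h2 : p.2 * p.2 = p.2 := congrArg Prod.snd h
  exact mul_eq_right.1 h2

end Aux

/-- the idempotents of `Σ_n^G` form a subsemigroup which is a left regular
band: products of idempotents are idempotent (in `Σ_n^G`), and `x·y·x = x·y`. -/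
theorem idempotents_leftRegularBand {n : ℕ} {G : Type*} [Group G]
    (x y : OGP n G) (hx : IsOGP x) (hy : IsOGP y)
    (hx2 : mulOGP x x = x) (hy2 : mulOGP y y = y) :
    IsOGP (mulOGP x y) ∧ mulOGP (mulOGP x y) (mulOGP x y) = mulOGP x y ∧
      mulOGP (mulOGP x y) x = mulOGP x y := by
  have hxl := aux_labels_one hx hx2
  have hyl := aux_labels_one hy hy2
  have hz : IsOGP (mulOGP x y) := aux_mulOGP_isOGP hx hy
  have hzl : ∀ p ∈ mulOGP x y, p.2 = 1 := by
    intro p hp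
    rcases aux_mem_mul hp with ⟨bg, hbg, ch, hch, rfl, _⟩
    simp [hxl bg hbg, hyl ch hch]
  refine ⟨hz, ?_, ?_⟩
  · rw [aux_mulOGP_self hz]
    have : ∀ p ∈ mulOGP x y, ((fun p => (p.1, p.2 * p.2)) p) = id p := by
      intro p hp
      have h2 : p.2 * p.2 = p.2 := by rw [hzl p hp]; exact one_mul 1
      show (p.1, p.2 * p.2) = id p
      rw [h2]
      rfl
    rw [List.map_congr_left this, List.map_id]
  · rw [show mulOGP (mulOGP x y) x = (mulOGP x y).flatMap (fun dg => x.filterMap fun ch =>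
      if (dg.1 ∩ ch.1).Nonempty then some (dg.1 ∩ ch.1, ch.2 * dg.2) else none) from rfl]
    have hcong : ∀ dg ∈ mulOGP x y, (x.filterMap fun ch =>
        if (dg.1 ∩ ch.1).Nonempty then some (dg.1 ∩ ch.1, ch.2 * dg.2) else none) = [dg] := by
      intro dg hdg
      rcases aux_mem_mul hdg with ⟨bg, hbg, ch, hch, heq, hne⟩
      have hsub : dg.1 ⊆ bg.1 := by rw [heq]; exact Finset.inter_subset_left
      have := aux_filterMap_inter hx (hz.1 dg hdg) hbg hsub dg.2
      rw [this, hxl bg hbg, one_mul]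
    rw [List.flatMap_congr (g := fun dg => [dg]) hcong, List.flatMap_singleton']
end

section
/- For G-compositions α = ((a_1,g_1),...,(a_k,g_k)) and β = ((b_1,h_1),...,(b_l,h_l)) of n, the product σ_α σ_β in (ZΣ_n^G)^{S_n} equals the sum of σ_{M'} over all k×l matrices M compatible with α and β, where each entry is 0 or a pair (a,g) with a > 0 and g ∈ G, row i entries have sizes summing to a_i, column j entries have sizes summing to b_j, nonzero entries in position (i,j) have color h_j g_i, and M' is the G-composition obtained by reading the nonzero entries of M row by row. -/
/-- The type of an ordered `G`-partition: the `G`-composition of block sizes and labels. -/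
def typeOGP {n : ℕ} {G : Type*} (P : OGP n G) : List (ℕ × G) :=
  P.map fun p => (p.1.card, p.2)

/-- `α` is a `G`-composition of `n`. -/
def IsGComp (n : ℕ) {G : Type*} (α : List (ℕ × G)) : Prop :=
  (∀ p ∈ α, 0 < p.1) ∧ (α.map Prod.fst).sum = n

instance {n : ℕ} {G : Type*} [Mul G] : Mul (OGP n G) := ⟨mulOGP⟩

/-- `σ_α`: the sum (in `ℤΣ_n^G`) of all ordered `G`-partitions of type `α`. -/
noncomputable def sigmaA {n : ℕ} {G : Type*} (α : List (ℕ × G)) :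
    MonoidAlgebra ℤ (OGP n G) :=
  ∑ᶠ P ∈ {P : OGP n G | IsOGP P ∧ typeOGP P = α}, MonoidAlgebra.single P 1

/-- The size of a matrix entry: `|0| = 0` and `|(a, g)| = a`. -/
def entrySize {G : Type*} (x : Option (ℕ × G)) : ℕ := x.elim 0 Prod.fst

/-- `M` is compatible with `α` and `β`: row sums of sizes give the parts of `α`, column
sums give the parts of `β`, entries are positive, and the entry in position `(i,j)` has
color `h_j g_i`. -/
def Compat {G : Type*} [Mul G] (α β : List (ℕ × G))
    (M : Matrix (Fin α.length) (Fin β.length) (Option (ℕ × G))) : Prop :=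
  (∀ i, ∑ j, entrySize (M i j) = (α.get i).1) ∧
  (∀ j, ∑ i, entrySize (M i j) = (β.get j).1) ∧
  (∀ i j p, M i j = some p → 0 < p.1 ∧ p.2 = (β.get j).2 * (α.get i).2)

/-- `M'`: the `G`-composition obtained by reading the nonzero entries of `M` row by row. -/
def readMatrix {G : Type*} (α β : List (ℕ × G))
    (M : Matrix (Fin α.length) (Fin β.length) (Option (ℕ × G))) : List (ℕ × G) :=
  (List.finRange α.length).flatMap fun i =>
    (List.finRange β.length).filterMap fun j => M i j


section FFAux

variable {X Y : Type*}

/-- The common shape: read the entries of an `Option`-matrix row by row. -/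
def FF (k l : ℕ) {X : Type*} (f : Fin k → Fin l → Option X) : List X :=
  (List.finRange k).flatMap fun i => (List.finRange l).filterMap (f i)

theorem mem_FF {k l : ℕ} {f : Fin k → Fin l → Option X} {x : X} :
    x ∈ FF k l f ↔ ∃ i j, f i j = some x := by
  simp [FF, List.mem_flatMap, List.mem_filterMap, List.mem_finRange]

theorem FF_map {k l : ℕ} (f : Fin k → Fin l → Option X) (t : X → Y) :
    (FF k l f).map t = FF k l (fun i j => (f i j).map t) := by
  simp [FF, List.map_flatMap, List.map_filterMap]

theorem pairwise_finRange_get {m : ℕ} {s : Fin m → Fin m → Prop}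
    (h : (List.finRange m).Pairwise s) {a b : Fin m} (hab : a < b) : s a b := by
  rw [List.pairwise_iff_get] at h
  have := h ⟨a.1, by simpa using a.2⟩ ⟨b.1, by simpa using b.2⟩ (by simpa using hab)
  simpa [List.get_finRange] using this

theorem pairwise_FF_of {k l : ℕ} {r : X → X → Prop} {f : Fin k → Fin l → Option X}
    (h : ∀ i j i' j' x x', (i, j) ≠ (i', j') → f i j = some x → f i' j' = some x' → r x x') :
    (FF k l f).Pairwise r := by
  rw [FF, List.pairwise_flatMap]
  constructor
  · intro i _
    rw [List.pairwise_filterMap]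
    refine List.Pairwise.imp ?_ (List.pairwise_lt_finRange l)
    · intro j j' hjj' x hx x' hx'
      exact h i j i j' x x' (by simp [Prod.ext_iff, hjj'.ne]) hx hx'
  · refine List.Pairwise.imp ?_ (List.pairwise_lt_finRange k)
    intro i i' hii' x hx y hy
    rw [List.mem_filterMap] at hx hy
    obtain ⟨j, _, hj⟩ := hx
    obtain ⟨j', _, hj'⟩ := hy
    exact h i j i' j' x y (by simp [Prod.ext_iff]; intro hi; exact absurd hi hii'.ne) hj hj'

theorem pairwise_of_FF {k l : ℕ} {r : X → X → Prop} (hr : Symmetric r)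
    {f : Fin k → Fin l → Option X} (h : (FF k l f).Pairwise r) :
    ∀ i j i' j' x x', (i, j) ≠ (i', j') → f i j = some x → f i' j' = some x' → r x x' := by
  rw [FF, List.pairwise_flatMap] at h
  intro i j i' j' x x' hne hx hx'
  have hxm : x ∈ (List.finRange l).filterMap (f i) := List.mem_filterMap.2 ⟨j, by simp, hx⟩
  have hxm' : x' ∈ (List.finRange l).filterMap (f i') := List.mem_filterMap.2 ⟨j', by simp, hx'⟩
  rcases lt_trichotomy i i' with hii | hii | hii
  · exact pairwise_finRange_get h.2 hii x hxm x' hxm'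
  · subst hii
    have hjj : j ≠ j' := by rintro rfl; exact hne rfl
    have hp := h.1 i (by simp)
    rw [List.pairwise_filterMap] at hp
    rcases lt_trichotomy j j' with hj | hj | hj
    · exact pairwise_finRange_get hp hj x hx x' hx'
    · exact absurd hj hjj
    · exact hr (pairwise_finRange_get hp hj x' hx' x hx)
  · exact hr (pairwise_finRange_get h.2 hii x' hxm' x hxm)

/-- Lift along a `filterMap` on a nodup list. -/
theorem lift_filterMap {J : Type*} [DecidableEq J] {t : Y → X} :
    ∀ (L : List J) (R : List Y) (f : J → Option X), L.Nodup → R.map t = L.filterMap f →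
    ∃ g : J → Option Y, (∀ j ∈ L, (g j).map t = f j) ∧ L.filterMap g = R := by
  intro L
  induction L with
  | nil =>
    intro R f _ h
    refine ⟨fun _ => none, by simp, ?_⟩
    simp only [List.filterMap_nil] at h ⊢
    exact (List.map_eq_nil_iff.mp h).symm
  | cons j L' ih =>
    intro R f hnd h
    have hj' : j ∉ L' := (List.nodup_cons.mp hnd).1
    have hnd' : L'.Nodup := (List.nodup_cons.mp hnd).2
    rw [List.filterMap_cons] at h
    rcases hfj : f j with _ | x
    · rw [hfj] at h
      obtain ⟨g, hg1, hg2⟩ := ih R f hnd' h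
      refine ⟨Function.update g j none, ?_, ?_⟩
      · intro j' hj'm
        rcases List.mem_cons.mp hj'm with rfl | hmem
        · simp [hfj]
        · have : j' ≠ j := fun e => hj' (by rwa [e] at hmem)
          simp [Function.update_of_ne this, hg1 j' hmem]
      · rw [List.filterMap_cons]
        simp only [Function.update_self]
        have hcong : List.filterMap (Function.update g j none) L' = List.filterMap g L' :=
          List.filterMap_congr (fun x hx =>
            Function.update_of_ne (fun e : x = j => hj' (by rwa [e] at hx)) none g)
        rw [hcong]
        exact hg2
    · rw [hfj] at h
      rcases List.map_eq_cons_iff.mp h with ⟨y, R', rfl, hty, hR'⟩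
      obtain ⟨g, hg1, hg2⟩ := ih R' f hnd' hR'
      refine ⟨Function.update g j (some y), ?_, ?_⟩
      · intro j' hj'm
        rcases List.mem_cons.mp hj'm with rfl | hmem
        · simp [hfj, hty]
        · have : j' ≠ j := fun e => hj' (by rwa [e] at hmem)
          simp [Function.update_of_ne this, hg1 j' hmem]
      · rw [List.filterMap_cons]
        simp only [Function.update_self]
        have hcong : List.filterMap (Function.update g j (some y)) L' = List.filterMap g L' :=
          List.filterMap_congr (fun x hx =>
            Function.update_of_ne (fun e : x = j => hj' (by rwa [e] at hx)) (some y) g)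
        rw [hcong, hg2]

/-- Lift along the flatMap-of-filterMaps shape on a nodup list of rows. -/
theorem lift_FF_aux {t : Y → X} {k l : ℕ} :
    ∀ (L : List (Fin k)) (R : List Y) (f : Fin k → Fin l → Option X), L.Nodup →
    R.map t = L.flatMap (fun i => (List.finRange l).filterMap (f i)) →
    ∃ g : Fin k → Fin l → Option Y, (∀ i ∈ L, ∀ j, (g i j).map t = f i j) ∧
      L.flatMap (fun i => (List.finRange l).filterMap (g i)) = R := by
  intro L
  induction L with
  | nil =>
    intro R f _ h
    refine ⟨fun _ _ => none, by simp, ?_⟩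
    simp only [List.flatMap_nil] at h ⊢
    exact (List.map_eq_nil_iff.mp h).symm
  | cons i L' ih =>
    intro R f hnd h
    have hi' : i ∉ L' := (List.nodup_cons.mp hnd).1
    have hnd' : L'.Nodup := (List.nodup_cons.mp hnd).2
    rw [List.flatMap_cons] at h
    rcases List.map_eq_append_iff.mp h with ⟨R₁, R₂, rfl, h₁, h₂⟩
    obtain ⟨g₁, hg11, hg12⟩ := lift_filterMap (List.finRange l) R₁ (f i) (List.nodup_finRange l) h₁
    obtain ⟨g, hg1, hg2⟩ := ih R₂ f hnd' h₂
    refine ⟨Function.update g i g₁, ?_, ?_⟩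
    · intro i' hi'm j
      rcases List.mem_cons.mp hi'm with rfl | hmem
      · simp only [Function.update_self]; exact hg11 j (by simp)
      · have : i' ≠ i := fun e => hi' (by rwa [e] at hmem)
        simp only [Function.update_of_ne this]; exact hg1 i' hmem j
    · rw [List.flatMap_cons]
      simp only [Function.update_self]
      have hcong : (L'.flatMap fun x => (List.finRange l).filterMap (Function.update g i g₁ x)) =
          L'.flatMap fun x => (List.finRange l).filterMap (g x) :=
        List.flatMap_congr (fun x hx => by
          rw [Function.update_of_ne (fun e : x = i => hi' (by rwa [e] at hx)) g₁ g])
      rw [hcong, hg12, hg2]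

theorem lift_FF {t : Y → X} {k l : ℕ} {R : List Y} {f : Fin k → Fin l → Option X}
    (h : R.map t = FF k l f) :
    ∃ g : Fin k → Fin l → Option Y, (∀ i j, (g i j).map t = f i j) ∧ FF k l g = R := by
  obtain ⟨g, hg1, hg2⟩ := lift_FF_aux (List.finRange k) R f (List.nodup_finRange k) h
  exact ⟨g, fun i j => hg1 i (by simp) j, hg2⟩

theorem filterMap_pattern_len {J : Type*} {g g' : J → Option Y} :
    ∀ (L : List J), (∀ j ∈ L, (g j).isSome = (g' j).isSome) →
      (L.filterMap g).length = (L.filterMap g').length := by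
  intro L
  induction L with
  | nil => simp
  | cons j L' ih =>
    intro h
    rw [List.filterMap_cons, List.filterMap_cons]
    have hj := h j (by simp)
    rcases hgj : g j with _ | y <;> rcases hgj' : g' j with _ | y' <;>
      simp [hgj, hgj'] at hj ⊢ <;> exact ih (fun j hjm => h j (by simp [hjm]))

theorem filterMap_pattern_inj {J : Type*} {g g' : J → Option Y} :
    ∀ (L : List J), (∀ j ∈ L, (g j).isSome = (g' j).isSome) →
      L.filterMap g = L.filterMap g' → ∀ j ∈ L, g j = g' j := by
  intro L
  induction L with
  | nil => simp
  | cons j L' ih =>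
    intro hpat heq j' hj'
    have hj := hpat j (by simp)
    have hpat' : ∀ a ∈ L', (g a).isSome = (g' a).isSome := fun a ha => hpat a (by simp [ha])
    rw [List.filterMap_cons, List.filterMap_cons] at heq
    rcases hgj : g j with _ | y <;> rcases hgj' : g' j with _ | y' <;>
      simp [hgj, hgj'] at hj heq
    · rcases List.mem_cons.mp hj' with rfl | hmem
      · rw [hgj, hgj']
      · exact ih hpat' heq j' hmem
    · rcases List.mem_cons.mp hj' with rfl | hmem
      · rw [hgj, hgj', heq.1]
      · exact ih hpat' heq.2 j' hmem

theorem FF_pattern_inj_aux {k l : ℕ} {g g' : Fin k → Fin l → Option Y}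
    (hpat : ∀ i j, (g i j).isSome = (g' i j).isSome) :
    ∀ (L : List (Fin k)),
      L.flatMap (fun i => (List.finRange l).filterMap (g i)) =
        L.flatMap (fun i => (List.finRange l).filterMap (g' i)) →
      ∀ i ∈ L, ∀ j, g i j = g' i j := by
  intro L
  induction L with
  | nil => simp
  | cons i L' ih =>
    intro heq' i' hi' j
    rw [List.flatMap_cons, List.flatMap_cons] at heq'
    have hlen : ((List.finRange l).filterMap (g i)).length =
        ((List.finRange l).filterMap (g' i)).length :=
      filterMap_pattern_len _ (fun j _ => hpat i j)
    obtain ⟨h1, h2⟩ := List.append_inj heq' hlen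
    rcases List.mem_cons.mp hi' with rfl | hmem
    · exact filterMap_pattern_inj _ (fun j _ => hpat i' j) h1 j (by simp)
    · exact ih h2 i' hmem j

theorem FF_pattern_inj {k l : ℕ} {g g' : Fin k → Fin l → Option Y}
    (hpat : ∀ i j, (g i j).isSome = (g' i j).isSome)
    (heq : FF k l g = FF k l g') : ∀ i j, g i j = g' i j := fun i j =>
  FF_pattern_inj_aux hpat (List.finRange k) heq i (by simp) j

end FFAux

section OGPAux

variable {n : ℕ} {G : Type*} [Group G]

/-- The block of an optional entry. -/
def blkO {n : ℕ} {G : Type*} (o : Option (Finset (Fin n) × G)) : Finset (Fin n) :=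
  o.elim ∅ Prod.fst

theorem mem_foldr_union {L : OGP n G} {x : Fin n} :
    x ∈ L.foldr (fun p s => p.1 ∪ s) ∅ ↔ ∃ p ∈ L, x ∈ p.1 := by
  induction L with
  | nil => simp
  | cons p L ih => simp [ih]

theorem list_eq_map_finRange {A : Type*} (L : List A) {k : ℕ} (h : L.length = k) (d : A) :
    L = (List.finRange k).map (fun i => L.getD i.1 d) := by
  subst h
  refine List.ext_get (by simp) ?_
  intro m h1 h2
  have hm : m < L.length := h1
  simp [List.get_eq_getElem, List.getD_eq_getElem _ _ hm]

theorem get_of_eq_map_finRange {A : Type*} {L : List A} {k : ℕ} {u : Fin k → A}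
    (h : L = (List.finRange k).map u) (i : Fin k) (hi : i.1 < L.length) :
    L.get ⟨i.1, hi⟩ = u i := by
  subst h
  simp [List.get_eq_getElem]

/-- The `i`-th entry of `P`, viewed with index type `Fin α.length`. -/
def eEnt (α : List (ℕ × G)) (P : OGP n G) (i : Fin α.length) : Finset (Fin n) × G :=
  P.getD i.1 (∅, (1 : G))

theorem length_of_type {P : OGP n G} {α : List (ℕ × G)} (hPt : typeOGP P = α) :
    P.length = α.length := by
  simpa [typeOGP] using congrArg List.length hPt

theorem eEnt_eq_get {α : List (ℕ × G)} {P : OGP n G} (hPk : P.length = α.length)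
    (i : Fin α.length) : eEnt α P i = P.get ⟨i.1, by omega⟩ := by
  have h : i.1 < P.length := by omega
  simp only [eEnt]
  rw [List.getD_eq_getElem _ _ h]
  simp [List.get_eq_getElem]

theorem P_rep {α : List (ℕ × G)} {P : OGP n G} (hPk : P.length = α.length) :
    P = (List.finRange α.length).map (eEnt α P) :=
  list_eq_map_finRange P hPk (∅, (1 : G))

theorem eEnt_map {α : List (ℕ × G)} (u : Fin α.length → Finset (Fin n) × G) (i : Fin α.length) :
    eEnt α ((List.finRange α.length).map u) i = u i := by
  have : i.1 < ((List.finRange α.length).map u).length := by simp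
  simp [eEnt, List.getD_eq_getElem _ _ this]

theorem get_type {P : OGP n G} {α : List (ℕ × G)} (hPt : typeOGP P = α) (i : Fin α.length) :
    α.get i = ((eEnt α P i).1.card, (eEnt α P i).2) := by
  have hPk : P.length = α.length := length_of_type hPt
  rw [eEnt_eq_get hPk]
  subst hPt
  have hi : i.1 < P.length := by omega
  rw [List.get_eq_getElem]
  simp [typeOGP, List.get_eq_getElem]

theorem eEnt_mem {α : List (ℕ × G)} {P : OGP n G} (hPk : P.length = α.length)
    (i : Fin α.length) : eEnt α P i ∈ P := by
  rw [eEnt_eq_get hPk]; exact List.get_mem _ _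

theorem eEnt_disj {α : List (ℕ × G)} {P : OGP n G} (hP : IsOGP P)
    (hPk : P.length = α.length) {i i' : Fin α.length} (h : i ≠ i') :
    Disjoint (eEnt α P i).1 (eEnt α P i').1 := by
  have hp := hP.2.1
  rw [List.pairwise_iff_get] at hp
  rw [eEnt_eq_get hPk, eEnt_eq_get hPk]
  rcases lt_or_gt_of_ne h with hlt | hgt
  · exact hp ⟨i.1, by omega⟩ ⟨i'.1, by omega⟩ hlt
  · exact (hp ⟨i'.1, by omega⟩ ⟨i.1, by omega⟩ hgt).symm

theorem eEnt_cover {α : List (ℕ × G)} {P : OGP n G} (hP : IsOGP P)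
    (hPk : P.length = α.length) (x : Fin n) : ∃ i : Fin α.length, x ∈ (eEnt α P i).1 := by
  have hx : x ∈ P.foldr (fun p s => p.1 ∪ s) ∅ := by rw [hP.2.2]; exact Finset.mem_univ x
  rw [mem_foldr_union] at hx
  obtain ⟨p, hpm, hxp⟩ := hx
  obtain ⟨m, hm, hpe⟩ := List.mem_iff_getElem.mp hpm
  refine ⟨⟨m, by omega⟩, ?_⟩
  rw [eEnt_eq_get hPk]
  simpa [List.get_eq_getElem, hpe] using hxp

/-- The block decomposition: `B = ⋃_j (B ∩ C_j)`. -/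
theorem block_decomp {β : List (ℕ × G)} {Q : OGP n G} (hQ : IsOGP Q)
    (hQk : Q.length = β.length) (B : Finset (Fin n)) :
    B = Finset.univ.biUnion (fun j : Fin β.length => B ∩ (eEnt β Q j).1) := by
  ext x
  simp only [Finset.mem_biUnion, Finset.mem_univ, true_and, Finset.mem_inter]
  constructor
  · intro hx
    obtain ⟨j, hj⟩ := eEnt_cover hQ hQk x
    exact ⟨j, hx, hj⟩
  · rintro ⟨j, hx, -⟩; exact hx

variable (α β : List (ℕ × G))

/-- The optional block-level entry of the product at position `(i,j)`. -/
def fblk (P Q : OGP n G) (i : Fin α.length) (j : Fin β.length) :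
    Option (Finset (Fin n) × G) :=
  if ((eEnt α P i).1 ∩ (eEnt β Q j).1).Nonempty
  then some ((eEnt α P i).1 ∩ (eEnt β Q j).1, (eEnt β Q j).2 * (eEnt α P i).2) else none

/-- The matrix of a pair `(P, Q)`. -/
def MmatPQ (P Q : OGP n G) : Matrix (Fin α.length) (Fin β.length) (Option (ℕ × G)) :=
  fun i j => (fblk α β P Q i j).map (fun p => (p.1.card, p.2))

variable {α β}

theorem mulOGP_eq_FF {P Q : OGP n G} (hPk : P.length = α.length)
    (hQk : Q.length = β.length) :
    mulOGP P Q = FF α.length β.length (fblk α β P Q) := by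
  conv_lhs => rw [mulOGP, P_rep hPk, P_rep (α := β) hQk]
  rw [List.flatMap_map]
  refine List.flatMap_congr (fun i _ => ?_)
  rw [List.filterMap_map]
  rfl

theorem type_mulOGP {P Q : OGP n G} (hPk : P.length = α.length) (hQk : Q.length = β.length) :
    typeOGP (mulOGP P Q) = readMatrix α β (MmatPQ α β P Q) := by
  rw [typeOGP, mulOGP_eq_FF hPk hQk, FF_map]
  rfl

theorem entrySize_MmatPQ (P Q : OGP n G) (i : Fin α.length) (j : Fin β.length) :
    entrySize (MmatPQ α β P Q i j) = ((eEnt α P i).1 ∩ (eEnt β Q j).1).card := by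
  by_cases h : ((eEnt α P i).1 ∩ (eEnt β Q j).1).Nonempty
  · simp [MmatPQ, fblk, h, entrySize]
  · rw [Finset.not_nonempty_iff_eq_empty] at h
    simp [MmatPQ, fblk, h, entrySize]

theorem compat_MmatPQ {P Q : OGP n G} (hP : IsOGP P) (hPt : typeOGP P = α)
    (hQ : IsOGP Q) (hQt : typeOGP Q = β) : Compat α β (MmatPQ α β P Q) := by
  have hPk := length_of_type hPt
  have hQk := length_of_type hQt
  refine ⟨?_, ?_, ?_⟩
  · intro i
    have hdec := block_decomp hQ hQk (eEnt α P i).1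
    have hcard : (eEnt α P i).1.card =
        ∑ j : Fin β.length, ((eEnt α P i).1 ∩ (eEnt β Q j).1).card := by
      conv_lhs => rw [hdec]
      rw [Finset.card_biUnion]
      intro j _ j' _ hjj'
      exact Finset.disjoint_of_subset_left Finset.inter_subset_right
        (Finset.disjoint_of_subset_right Finset.inter_subset_right (eEnt_disj hQ hQk hjj'))
    simp only [entrySize_MmatPQ]
    rw [← hcard, get_type hPt]
  · intro j
    have hdec := block_decomp hP hPk (eEnt β Q j).1
    have hcard : (eEnt β Q j).1.card =
        ∑ i : Fin α.length, ((eEnt α P i).1 ∩ (eEnt β Q j).1).card := by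
      conv_lhs => rw [hdec]
      rw [Finset.card_biUnion]
      · refine Finset.sum_congr rfl (fun i _ => by rw [Finset.inter_comm])
      · intro i _ i' _ hii'
        exact Finset.disjoint_of_subset_left Finset.inter_subset_right
          (Finset.disjoint_of_subset_right Finset.inter_subset_right (eEnt_disj hP hPk hii'))
    simp only [entrySize_MmatPQ]
    rw [← hcard, get_type hQt]
  · intro i j p hp
    simp only [MmatPQ, fblk] at hp
    by_cases h : ((eEnt α P i).1 ∩ (eEnt β Q j).1).Nonempty
    · rw [if_pos h] at hp
      simp only [Option.map_some, Option.some.injEq] at hp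
      subst hp
      refine ⟨Finset.card_pos.mpr h, ?_⟩
      rw [get_type hPt, get_type hQt]
    · rw [if_neg h] at hp
      simp at hp

theorem isOGP_mulOGP {P Q : OGP n G} (hP : IsOGP P) (hPt : typeOGP P = α)
    (hQ : IsOGP Q) (hQt : typeOGP Q = β) : IsOGP (mulOGP P Q) := by
  have hPk := length_of_type hPt
  have hQk := length_of_type hQt
  rw [mulOGP_eq_FF hPk hQk]
  refine ⟨?_, ?_, ?_⟩
  · intro p hp
    rw [mem_FF] at hp
    obtain ⟨i, j, hij⟩ := hp
    rw [fblk] at hij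
    by_cases h : ((eEnt α P i).1 ∩ (eEnt β Q j).1).Nonempty
    · rw [if_pos h] at hij
      cases hij
      exact h
    · rw [if_neg h] at hij; cases hij
  · refine pairwise_FF_of (fun i j i' j' x x' hne hx hx' => ?_)
    rw [fblk] at hx hx'
    by_cases h : ((eEnt α P i).1 ∩ (eEnt β Q j).1).Nonempty
    · by_cases h' : ((eEnt α P i').1 ∩ (eEnt β Q j').1).Nonempty
      · rw [if_pos h] at hx; rw [if_pos h'] at hx'
        cases hx; cases hx'
        by_cases hii : i = i'
        · subst hii
          have hjj : j ≠ j' := fun e => hne (by rw [e])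
          exact Finset.disjoint_of_subset_left Finset.inter_subset_right
            (Finset.disjoint_of_subset_right Finset.inter_subset_right (eEnt_disj hQ hQk hjj))
        · exact Finset.disjoint_of_subset_left Finset.inter_subset_left
            (Finset.disjoint_of_subset_right Finset.inter_subset_left (eEnt_disj hP hPk hii))
      · rw [if_neg h'] at hx'; cases hx'
    · rw [if_neg h] at hx; cases hx
  · rw [Finset.eq_univ_iff_forall]
    intro x
    rw [mem_foldr_union]
    obtain ⟨i, hi⟩ := eEnt_cover hP hPk x
    obtain ⟨j, hj⟩ := eEnt_cover hQ hQk x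
    have hne : ((eEnt α P i).1 ∩ (eEnt β Q j).1).Nonempty :=
      ⟨x, Finset.mem_inter.mpr ⟨hi, hj⟩⟩
    refine ⟨((eEnt α P i).1 ∩ (eEnt β Q j).1, (eEnt β Q j).2 * (eEnt α P i).2), ?_, ?_⟩
    · rw [mem_FF]
      exact ⟨i, j, by rw [fblk, if_pos hne]⟩
    · exact Finset.mem_inter.mpr ⟨hi, hj⟩

end OGPAux

section OGPAux2

variable {n : ℕ} {G : Type*} [Group G] {α β : List (ℕ × G)}

theorem backward_exists (hα : IsGComp n α) (hβ : IsGComp n β)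
    {M : Matrix (Fin α.length) (Fin β.length) (Option (ℕ × G))} (hM : Compat α β M)
    {R : OGP n G} (hR : IsOGP R) (hRt : typeOGP R = readMatrix α β M) :
    ∃ P Q : OGP n G, (IsOGP P ∧ typeOGP P = α) ∧ (IsOGP Q ∧ typeOGP Q = β) ∧
      MmatPQ α β P Q = M ∧ mulOGP P Q = R := by
  classical
  have hlift : R.map (fun p => (p.1.card, p.2)) = FF α.length β.length M := hRt
  obtain ⟨D, hD1, hD2⟩ := lift_FF hlift
  have hDmem : ∀ i j y, D i j = some y → y ∈ R := by
    intro i j y h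
    rw [← hD2]
    exact mem_FF.2 ⟨i, j, h⟩
  have hEcard : ∀ i j, (blkO (D i j)).card = entrySize (M i j) := by
    intro i j
    rcases h : D i j with _ | y
    · have hm : M i j = none := by rw [← hD1 i j, h]; rfl
      simp [blkO, h, hm, entrySize]
    · have hm : M i j = some (y.1.card, y.2) := by rw [← hD1 i j, h]; rfl
      simp [blkO, h, hm, entrySize]
  have hEdisj : ∀ i j i' j', (i, j) ≠ (i', j') →
      Disjoint (blkO (D i j)) (blkO (D i' j')) := by
    intro i j i' j' hne
    rcases h : D i j with _ | y
    · simp [blkO]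
    · rcases h' : D i' j' with _ | y'
      · simp [blkO]
      · have hpw : (FF α.length β.length D).Pairwise
            (fun p q : Finset (Fin n) × G => Disjoint p.1 q.1) := by
          rw [hD2]; exact hR.2.1
        have := pairwise_of_FF (fun p q hpq => hpq.symm) hpw i j i' j' y y' hne h h'
        simpa [blkO, h, h'] using this
  have hcover : ∀ x : Fin n, ∃ i j, x ∈ blkO (D i j) := by
    intro x
    have hx : x ∈ R.foldr (fun p s => p.1 ∪ s) ∅ := by rw [hR.2.2]; exact Finset.mem_univ x
    rw [mem_foldr_union] at hx
    obtain ⟨p, hpm, hxp⟩ := hx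
    rw [← hD2, mem_FF] at hpm
    obtain ⟨i, j, hij⟩ := hpm
    exact ⟨i, j, by simp [blkO, hij, hxp]⟩
  set B : Fin α.length → Finset (Fin n) :=
    fun i => Finset.univ.biUnion (fun j => blkO (D i j)) with hBdef
  set C : Fin β.length → Finset (Fin n) :=
    fun j => Finset.univ.biUnion (fun i => blkO (D i j)) with hCdef
  set P : OGP n G := (List.finRange α.length).map (fun i => (B i, (α.get i).2)) with hPdef
  set Q : OGP n G := (List.finRange β.length).map (fun j => (C j, (β.get j).2)) with hQdef
  have hBcard : ∀ i, (B i).card = (α.get i).1 := by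
    intro i
    rw [hBdef]
    rw [Finset.card_biUnion (fun j _ j' _ hjj' => hEdisj i j i j' (by simp [hjj']))]
    rw [← hM.1 i]
    exact Finset.sum_congr rfl (fun j _ => hEcard i j)
  have hCcard : ∀ j, (C j).card = (β.get j).1 := by
    intro j
    rw [hCdef]
    rw [Finset.card_biUnion (fun i _ i' _ hii' => hEdisj i j i' j (by simp [hii']))]
    rw [← hM.2.1 j]
    exact Finset.sum_congr rfl (fun i _ => hEcard i j)
  have hBdisj : ∀ i i', i ≠ i' → Disjoint (B i) (B i') := by
    intro i i' h
    rw [Finset.disjoint_biUnion_left]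
    intro j _
    rw [Finset.disjoint_biUnion_right]
    intro j' _
    exact hEdisj i j i' j' (by simp [h])
  have hCdisj : ∀ j j', j ≠ j' → Disjoint (C j) (C j') := by
    intro j j' h
    rw [Finset.disjoint_biUnion_left]
    intro i _
    rw [Finset.disjoint_biUnion_right]
    intro i' _
    exact hEdisj i j i' j' (by simp [h])
  have hPt : typeOGP P = α := by
    have h1 : typeOGP P = (List.finRange α.length).map (fun i => α.get i) := by
      rw [hPdef, typeOGP, List.map_map]
      refine List.map_congr_left (fun i _ => ?_)
      simp only [Function.comp_apply]
      rw [hBcard i]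
    rw [h1]
    exact List.map_get_finRange α
  have hQt : typeOGP Q = β := by
    have h1 : typeOGP Q = (List.finRange β.length).map (fun j => β.get j) := by
      rw [hQdef, typeOGP, List.map_map]
      refine List.map_congr_left (fun j _ => ?_)
      simp only [Function.comp_apply]
      rw [hCcard j]
    rw [h1]
    exact List.map_get_finRange β
  have hP : IsOGP P := by
    refine ⟨?_, ?_, ?_⟩
    · intro p hp
      rw [hPdef, List.mem_map] at hp
      obtain ⟨i, _, rfl⟩ := hp
      rw [← Finset.card_pos, hBcard i]
      exact hα.1 (α.get i) (List.get_mem _ _)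
    · rw [hPdef, List.pairwise_map]
      refine List.Pairwise.imp ?_ (List.pairwise_lt_finRange α.length)
      intro i i' hii'
      exact hBdisj i i' hii'.ne
    · rw [Finset.eq_univ_iff_forall]
      intro x
      rw [mem_foldr_union]
      obtain ⟨i, j, hx⟩ := hcover x
      refine ⟨(B i, (α.get i).2), ?_, ?_⟩
      · rw [hPdef, List.mem_map]; exact ⟨i, by simp, rfl⟩
      · exact Finset.mem_biUnion.2 ⟨j, Finset.mem_univ j, hx⟩
  have hQ : IsOGP Q := by
    refine ⟨?_, ?_, ?_⟩
    · intro p hp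
      rw [hQdef, List.mem_map] at hp
      obtain ⟨j, _, rfl⟩ := hp
      rw [← Finset.card_pos, hCcard j]
      exact hβ.1 (β.get j) (List.get_mem _ _)
    · rw [hQdef, List.pairwise_map]
      refine List.Pairwise.imp ?_ (List.pairwise_lt_finRange β.length)
      intro j j' hjj'
      exact hCdisj j j' hjj'.ne
    · rw [Finset.eq_univ_iff_forall]
      intro x
      rw [mem_foldr_union]
      obtain ⟨i, j, hx⟩ := hcover x
      refine ⟨(C j, (β.get j).2), ?_, ?_⟩
      · rw [hQdef, List.mem_map]; exact ⟨j, by simp, rfl⟩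
      · exact Finset.mem_biUnion.2 ⟨i, Finset.mem_univ i, hx⟩
  have hBC : ∀ i j, B i ∩ C j = blkO (D i j) := by
    intro i j
    ext x
    constructor
    · intro hx
      rw [Finset.mem_inter] at hx
      obtain ⟨hx1, hx2⟩ := hx
      rw [hBdef] at hx1
      rw [hCdef] at hx2
      simp only [Finset.mem_biUnion, Finset.mem_univ, true_and] at hx1 hx2
      obtain ⟨j', hj'⟩ := hx1
      obtain ⟨i', hi'⟩ := hx2
      have heq : (i, j') = (i', j) := by
        by_contra hne
        exact (Finset.disjoint_left.mp (hEdisj i j' i' j hne) hj') hi'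
      rw [Prod.mk.injEq] at heq
      rw [heq.2] at hj'
      exact hj'
    · intro hx
      rw [Finset.mem_inter]
      constructor
      · rw [hBdef]; exact Finset.mem_biUnion.2 ⟨j, Finset.mem_univ j, hx⟩
      · rw [hCdef]; exact Finset.mem_biUnion.2 ⟨i, Finset.mem_univ i, hx⟩
  have hPlen : P.length = α.length := by rw [hPdef]; simp
  have hQlen : Q.length = β.length := by rw [hQdef]; simp
  have heEP : ∀ i, eEnt α P i = (B i, (α.get i).2) := fun i => eEnt_map _ i
  have heEQ : ∀ j, eEnt β Q j = (C j, (β.get j).2) := fun j => eEnt_map _ j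
  have hfblk : ∀ i j, fblk α β P Q i j = D i j := by
    intro i j
    rw [fblk, heEP, heEQ]
    simp only
    rw [hBC i j]
    rcases h : D i j with _ | y
    · simp [blkO, h]
    · have hy : y.1.Nonempty := hR.1 y (hDmem i j y h)
      have hm : M i j = some (y.1.card, y.2) := by rw [← hD1 i j, h]; rfl
      have hsnd := (hM.2.2 i j (y.1.card, y.2) hm).2
      simp only [blkO, h, Option.elim]
      simp only [hy, ↓reduceIte]
      congr 1
      exact Prod.ext rfl hsnd.symm
  refine ⟨P, Q, ⟨hP, hPt⟩, ⟨hQ, hQt⟩, ?_, ?_⟩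
  · funext i j
    show (fblk α β P Q i j).map (fun p => (p.1.card, p.2)) = M i j
    rw [hfblk i j]
    exact hD1 i j
  · rw [mulOGP_eq_FF hPlen hQlen]
    rw [show fblk α β P Q = D from funext (fun i => funext (fun j => hfblk i j))]
    exact hD2

theorem forward_inj {P Q P' Q' : OGP n G} (hP : IsOGP P) (hPt : typeOGP P = α)
    (hQ : IsOGP Q) (hQt : typeOGP Q = β) (hP' : IsOGP P') (hPt' : typeOGP P' = α)
    (hQ' : IsOGP Q') (hQt' : typeOGP Q' = β)
    (hMeq : MmatPQ α β P Q = MmatPQ α β P' Q') (hmul : mulOGP P Q = mulOGP P' Q') :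
    P = P' ∧ Q = Q' := by
  have hPk := length_of_type hPt
  have hQk := length_of_type hQt
  have hPk' := length_of_type hPt'
  have hQk' := length_of_type hQt'
  have hpat : ∀ i j, (fblk α β P Q i j).isSome = (fblk α β P' Q' i j).isSome := by
    intro i j
    have h := congrFun (congrFun hMeq i) j
    have h1 := congrArg Option.isSome h
    simpa [MmatPQ] using h1
  have hFF : FF α.length β.length (fblk α β P Q) = FF α.length β.length (fblk α β P' Q') := by
    rw [← mulOGP_eq_FF hPk hQk, ← mulOGP_eq_FF hPk' hQk', hmul]
  have hfb := FF_pattern_inj hpat hFF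
  have hint : ∀ i j, (eEnt α P i).1 ∩ (eEnt β Q j).1 = (eEnt α P' i).1 ∩ (eEnt β Q' j).1 := by
    intro i j
    have h := hfb i j
    rw [fblk, fblk] at h
    by_cases h1 : ((eEnt α P i).1 ∩ (eEnt β Q j).1).Nonempty <;>
      by_cases h2 : ((eEnt α P' i).1 ∩ (eEnt β Q' j).1).Nonempty
    · rw [if_pos h1, if_pos h2] at h
      exact congrArg Prod.fst (Option.some.inj h)
    · rw [if_pos h1, if_neg h2] at h; cases h
    · rw [if_neg h1, if_pos h2] at h; cases h
    · rw [Finset.not_nonempty_iff_eq_empty] at h1 h2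
      rw [h1, h2]
  have hB : ∀ i, (eEnt α P i).1 = (eEnt α P' i).1 := by
    intro i
    rw [block_decomp hQ hQk (eEnt α P i).1, block_decomp hQ' hQk' (eEnt α P' i).1]
    exact Finset.biUnion_congr rfl (fun j _ => hint i j)
  have hC : ∀ j, (eEnt β Q j).1 = (eEnt β Q' j).1 := by
    intro j
    rw [block_decomp hP hPk (eEnt β Q j).1, block_decomp hP' hPk' (eEnt β Q' j).1]
    refine Finset.biUnion_congr rfl (fun i _ => ?_)
    rw [Finset.inter_comm, hint i, Finset.inter_comm]
  constructor
  · rw [P_rep hPk, P_rep hPk']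
    refine List.map_congr_left (fun i _ => ?_)
    refine Prod.ext (hB i) ?_
    have h1 := congrArg Prod.snd (get_type hPt i)
    have h2 := congrArg Prod.snd (get_type hPt' i)
    exact h1.symm.trans h2
  · rw [P_rep hQk, P_rep hQk']
    refine List.map_congr_left (fun j _ => ?_)
    refine Prod.ext (hC j) ?_
    have h1 := congrArg Prod.snd (get_type hQt j)
    have h2 := congrArg Prod.snd (get_type hQt' j)
    exact h1.symm.trans h2

theorem finite_S (γ : List (ℕ × G)) : {P : OGP n G | IsOGP P ∧ typeOGP P = γ}.Finite := by
  apply Set.Finite.of_finite_image (f := fun P : OGP n G => P.map Prod.fst)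
  · apply Set.Finite.subset (List.finite_length_eq (Finset (Fin n)) γ.length)
    rintro L ⟨P, hPmem, rfl⟩
    simp only [Set.mem_setOf_eq, List.length_map]
    exact length_of_type hPmem.2
  · intro P hP P' hP' h
    have htt : P.map (fun p => (p.1.card, p.2)) = P'.map (fun p => (p.1.card, p.2)) := by
      have e1 : typeOGP P = typeOGP P' := hP.2.trans hP'.2.symm
      rw [typeOGP, typeOGP] at e1
      exact e1
    refine List.ext_getElem? (fun m => ?_)
    have h₁ := congrArg (fun L => L[m]?) h
    have h₂ := congrArg (fun L => L[m]?) htt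
    simp only [List.getElem?_map] at h₁ h₂
    rcases e : P[m]? with _ | p <;> rcases e' : P'[m]? with _ | p'
    · rfl
    · rw [e, e'] at h₁; cases h₁
    · rw [e, e'] at h₁; cases h₁
    · rw [e, e'] at h₁ h₂
      simp only [Option.map_some, Option.some.injEq, Prod.mk.injEq] at h₁ h₂
      exact congrArg some (Prod.ext h₁ h₂.2)

theorem finite_compat (hα : IsGComp n α) :
    {M : Matrix (Fin α.length) (Fin β.length) (Option (ℕ × G)) | Compat α β M}.Finite := by
  classical
  apply Set.Finite.subset (Set.finite_range
    (fun N : Fin α.length → Fin β.length → Option (Fin (n + 1)) =>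
      (Matrix.of fun i j => (N i j).map (fun s => (s.1, (β.get j).2 * (α.get i).2)))))
  intro M hM
  refine ⟨fun i j => (M i j).map (fun p => (⟨min p.1 n, by omega⟩ : Fin (n + 1))), ?_⟩
  funext i j
  show ((M i j).map _).map _ = M i j
  rcases e : M i j with _ | p
  · simp
  · simp only [Option.map_some]
    obtain ⟨hpos, hsnd⟩ := hM.2.2 i j p e
    have hle : p.1 ≤ n := by
      have h1 : p.1 ≤ ∑ j', entrySize (M i j') := by
        have he : entrySize (M i j) = p.1 := by simp [e, entrySize]
        rw [← he]
        exact Finset.single_le_sum (f := fun j' => entrySize (M i j'))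
          (fun _ _ => Nat.zero_le _) (Finset.mem_univ j)
      rw [hM.1 i] at h1
      have h2 : (α.get i).1 ≤ n := by
        rw [← hα.2]
        exact List.single_le_sum (fun _ _ => Nat.zero_le _) _
          (List.mem_map.2 ⟨α.get i, List.get_mem _ _, rfl⟩)
      omega
    exact congrArg some (Prod.ext (by simp [min_eq_left hle]) hsnd.symm)

theorem sigmaA_eq (γ : List (ℕ × G)) :
    sigmaA (n := n) γ = ∑ P ∈ (finite_S (n := n) γ).toFinset, MonoidAlgebra.single P (1 : ℤ) := by
  rw [sigmaA]
  exact finsum_mem_eq_finite_toFinset_sum _ (finite_S γ)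

end OGPAux2


/-- the multiplication rule in `(ℤΣ_n^G)^{S_n}`:
`σ_α σ_β = Σ_M σ_{M'}` over all matrices `M` compatible with `α` and `β`. -/
theorem sigmaA_mul_sigmaA {n : ℕ} {G : Type*} [Group G]
    (α β : List (ℕ × G)) (hα : IsGComp n α) (hβ : IsGComp n β) :
    sigmaA (n := n) α * sigmaA (n := n) β =
      ∑ᶠ M ∈ {M : Matrix (Fin α.length) (Fin β.length) (Option (ℕ × G)) | Compat α β M},
        sigmaA (n := n) (readMatrix α β M) := by
  classical
  rw [finsum_mem_eq_finite_toFinset_sum _ (finite_compat (β := β) hα)]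
  have L1 : sigmaA (n := n) α * sigmaA (n := n) β =
      ∑ x ∈ (finite_S (n := n) α).toFinset ×ˢ (finite_S (n := n) β).toFinset,
        MonoidAlgebra.single (mulOGP x.1 x.2) (1 : ℤ) := by
    rw [sigmaA_eq, sigmaA_eq, Finset.sum_mul_sum, Finset.sum_product]
    refine Finset.sum_congr rfl (fun P _ => Finset.sum_congr rfl (fun Q _ => ?_))
    show (MonoidAlgebra.single P (1 : ℤ)) * MonoidAlgebra.single Q 1 =
      MonoidAlgebra.single (mulOGP P Q) 1
    rw [MonoidAlgebra.single_mul_single, one_mul]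
    rfl
  have R1 : ∑ M ∈ (finite_compat (β := β) (n := n) hα).toFinset,
        sigmaA (n := n) (readMatrix α β M) =
      ∑ x ∈ ((finite_compat (β := β) (n := n) hα).toFinset.sigma
          (fun M => (finite_S (n := n) (readMatrix α β M)).toFinset)),
        MonoidAlgebra.single x.2 (1 : ℤ) := by
    rw [Finset.sum_sigma]
    exact Finset.sum_congr rfl (fun M _ => sigmaA_eq _)
  rw [L1, R1]
  refine Finset.sum_bij (fun x hx => ⟨MmatPQ α β x.1 x.2, mulOGP x.1 x.2⟩) ?_ ?_ ?_ ?_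
  · intro x hx
    rw [Finset.mem_product, Set.Finite.mem_toFinset, Set.Finite.mem_toFinset] at hx
    obtain ⟨hx1, hx2⟩ := hx
    rw [Finset.mem_sigma, Set.Finite.mem_toFinset, Set.Finite.mem_toFinset]
    exact ⟨compat_MmatPQ hx1.1 hx1.2 hx2.1 hx2.2,
      isOGP_mulOGP hx1.1 hx1.2 hx2.1 hx2.2,
      type_mulOGP (length_of_type hx1.2) (length_of_type hx2.2)⟩
  · intro x hx x' hx' heq
    rw [Finset.mem_product, Set.Finite.mem_toFinset, Set.Finite.mem_toFinset] at hx hx'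
    have h1 : MmatPQ α β x.1 x.2 = MmatPQ α β x'.1 x'.2 := (Sigma.ext_iff.mp heq).1
    have h2 : mulOGP x.1 x.2 = mulOGP x'.1 x'.2 := eq_of_heq (Sigma.ext_iff.mp heq).2
    obtain ⟨e1, e2⟩ := forward_inj hx.1.1 hx.1.2 hx.2.1 hx.2.2 hx'.1.1 hx'.1.2
      hx'.2.1 hx'.2.2 h1 h2
    exact Prod.ext e1 e2
  · intro b hb
    rw [Finset.mem_sigma, Set.Finite.mem_toFinset, Set.Finite.mem_toFinset] at hb
    obtain ⟨P, Q, hPP, hQQ, hMe, hme⟩ := backward_exists hα hβ hb.1 hb.2.1 hb.2.2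
    refine ⟨(P, Q), ?_, ?_⟩
    · rw [Finset.mem_product, Set.Finite.mem_toFinset, Set.Finite.mem_toFinset]
      exact ⟨hPP, hQQ⟩
    · obtain ⟨M, R⟩ := b
      simp only at hMe hme ⊢
      rw [hMe, hme]
  · intro x hx
    rfl
end

section
/- Under the identification of the set C of singleton-block ordered G-partitions with the wreath product G≀S_n (identifying ((π_1,g_1),...,(π_n,g_n)) with ((({π_1},g_1),...,({π_n},g_n)))), left multiplication of σ_α on C satisfies σ_α · v = v * (σ_α · I) for every v ∈ G≀S_n, where I is the identity of G≀S_n and * is the group convolution in Z[G≀S_n]. In particular σ_α · I = X_α, the sum of all u ∈ G≀S_n with Co(u) ≤ α. -/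
/-- The wreath product `G ≀ S_n`: pairs `(π, g)` with `π ∈ S_n` and `g : [n] → G`. -/
def Wreath (n : ℕ) (G : Type*) := Equiv.Perm (Fin n) × (Fin n → G)

/-- Multiplication `((π_i, g_i)) * ((τ_j, h_j)) = ((π_{τ_j}, g_{τ_j} h_j))_j`. -/
instance {n : ℕ} {G : Type*} [Group G] : Group (Wreath n G) where
  mul u v := (u.1 * v.1, fun i => u.2 (v.1 i) * v.2 i)
  one := (1, fun _ => 1)
  inv u := (u.1⁻¹, fun i => (u.2 (u.1⁻¹ i))⁻¹)
  mul_assoc a b c := by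
    refine Prod.ext (mul_assoc _ _ _) (funext fun i => ?_)
    show (fun j => a.2 (b.1 j) * b.2 j) (c.1 i) * c.2 i
        = a.2 ((b.1 * c.1) i) * (fun j => b.2 (c.1 j) * c.2 j) i
    simp [Equiv.Perm.mul_apply, mul_assoc]
  one_mul u := by
    refine Prod.ext (one_mul _) (funext fun i => ?_)
    show (fun _ => (1 : G)) (u.1 i) * u.2 i = u.2 i
    simp
  mul_one u := by
    refine Prod.ext (mul_one _) (funext fun i => ?_)
    show u.2 ((1 : Equiv.Perm (Fin n)) i) * 1 = u.2 i
    simp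
  inv_mul_cancel u := by
    refine Prod.ext (inv_mul_cancel _) (funext fun i => ?_)
    show (u.2 (u.1⁻¹ (u.1 i)))⁻¹ * u.2 i = 1
    simp

/-- The word of `u = ((π_1, g_1), …, (π_n, g_n))`: the list of pairs `(π_i, g_i)`. -/
def wordOf {n : ℕ} {G : Type*} (u : Wreath n G) : List (ℕ × G) :=
  (List.finRange n).map fun i => ((u.1 i : ℕ), u.2 i)

/-- `u` fits `α`, i.e. `Co(u) ≤ α`: the word of `u` splits into consecutive segments whose
lengths are the parts of `α`, with `π` strictly increasing and the `G`-label constant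
(equal to the corresponding color of `α`) on each segment. -/
def Fits {n : ℕ} {G : Type*} (u : Wreath n G) (α : List (ℕ × G)) : Prop :=
  ∃ ss : List (List (ℕ × G)), ss.flatten = wordOf u ∧
    List.Forall₂ (fun s p => s.length = p.1 ∧ List.Chain' (· < ·) (s.map Prod.fst) ∧
      ∀ q ∈ s, q.2 = p.2) ss α

/-- `α = Co(u)`: `α` is the finest (minimal-length) `G`-composition that `u` fits. -/
def IsCo {n : ℕ} {G : Type*} (u : Wreath n G) (α : List (ℕ × G)) : Prop :=
  IsGComp n α ∧ Fits u α ∧ ∀ β, IsGComp n β → Fits u β → α.length ≤ β.length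

/-- `X_α = Σ_{u : Co(u) ≤ α} u` in `ℤ[G ≀ S_n]`. -/
noncomputable def Xw {n : ℕ} {G : Type*} [Group G] (α : List (ℕ × G)) :
    MonoidAlgebra ℤ (Wreath n G) :=
  ∑ᶠ u ∈ {u : Wreath n G | Fits u α}, MonoidAlgebra.single u 1

/-- `Y_α = Σ_{u : Co(u) = α} u` in `ℤ[G ≀ S_n]`. -/
noncomputable def Yw {n : ℕ} {G : Type*} [Group G] (α : List (ℕ × G)) :
    MonoidAlgebra ℤ (Wreath n G) :=
  ∑ᶠ u ∈ {u : Wreath n G | IsCo u α}, MonoidAlgebra.single u 1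

/-- The identification of `G ≀ S_n` with the singleton-block ordered `G`-partitions:
`((π_1,g_1),…,(π_n,g_n)) ↦ (({π_1},g_1),…,({π_n},g_n))`. -/
def iota {n : ℕ} {G : Type*} (u : Wreath n G) : OGP n G :=
  (List.finRange n).map fun i => ({u.1 i}, u.2 i)


section MyAuxAll
open List
section Chunks
variable {β γ : Type*}

def chunks : List ℕ → List β → List (List β)
  | [], _ => []
  | a :: L, l => l.take a :: chunks L (l.drop a)

theorem chunks_flatten_take (L : List ℕ) (l : List β) :
    (chunks L l).flatten = l.take L.sum := by
  induction L generalizing l with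
  | nil => simp [chunks]
  | cons a L ih =>
    simp only [chunks, flatten_cons, ih, sum_cons, take_add]

theorem chunks_flatten (L : List ℕ) (l : List β) (h : L.sum = l.length) :
    (chunks L l).flatten = l := by
  rw [chunks_flatten_take, h, take_length]

theorem chunks_map (f : β → γ) (L : List ℕ) (l : List β) :
    chunks L (l.map f) = (chunks L l).map (List.map f) := by
  induction L generalizing l with
  | nil => simp [chunks]
  | cons a L ih =>
    simp only [chunks, map_cons]
    rw [show (map f l).take a = map f (l.take a) by first | rw [map_take] | rw [← map_take],
      show (map f l).drop a = map f (l.drop a) by first | rw [map_drop] | rw [← map_drop], ih]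

theorem chunks_of_flatten (ss : List (List β)) :
    chunks (ss.map length) ss.flatten = ss := by
  induction ss with
  | nil => simp [chunks]
  | cons s ss ih => simp [chunks, take_left, drop_left, ih]

theorem chunks_forall₂_length (L : List ℕ) (l : List β) (h : L.sum ≤ l.length) :
    Forall₂ (fun t a => t.length = a) (chunks L l) L := by
  induction L generalizing l with
  | nil => exact Forall₂.nil
  | cons a L ih =>
    simp only [sum_cons] at h
    have ha : a ≤ l.length := le_trans (Nat.le_add_right _ _) h
    refine Forall₂.cons (by simp [length_take, Nat.min_eq_left ha]) (ih _ ?_)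
    simp only [length_drop]
    omega

theorem chunks_sublist (L : List ℕ) (l : List β) :
    ∀ t ∈ chunks L l, t.Sublist l := by
  induction L generalizing l with
  | nil => simp [chunks]
  | cons a L ih =>
    intro t ht
    rcases (by simpa [chunks] using ht : t = l.take a ∨ t ∈ chunks L (l.drop a)) with h | h
    · exact h ▸ take_sublist a l
    · exact (ih _ t h).trans (drop_sublist a l)

theorem forall₂_and' {R S : β → γ → Prop} {l : List β} {l' : List γ}
    (h1 : Forall₂ R l l') (h2 : Forall₂ S l l') :
    Forall₂ (fun a b => R a b ∧ S a b) l l' := by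
  induction h1 with
  | nil => exact Forall₂.nil
  | cons hr _ ih =>
    rcases h2 with _ | ⟨hs, h2⟩
    exact Forall₂.cons ⟨hr, hs⟩ (ih h2)

theorem filterMap_ite_eq_filter_map {α' : Type*} (p : β → Prop) [DecidablePred p]
    (F : β → α') (l : List β) :
    l.filterMap (fun a => if p a then some (F a) else none)
      = (l.filter (fun a => p a)).map F := by
  induction l with
  | nil => rfl
  | cons a l ih =>
    by_cases h : p a <;> simp [h, ih]

end Chunks

theorem filter_finRange_mem {n : ℕ} (v : List (Fin n)) (hv : v.Pairwise (· < ·)) :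
    (List.finRange n).filter (fun i => i ∈ v) = v := by
  have hnd : ((List.finRange n).filter (fun i => i ∈ v)).Nodup :=
    (List.nodup_finRange n).filter _
  refine List.Perm.eq_of_pairwise (fun a b _ _ h1 h2 => absurd (h1.trans h2) (lt_irrefl _)) ?_ hv ((List.perm_ext_iff_of_nodup hnd hv.nodup).2 ?_)
  · exact (List.pairwise_lt_finRange n).filter _
  · intro a; simp

theorem map_get_cast_finRange {β : Type*} {n : ℕ} (t : List β) (h : t.length = n) :
    (List.finRange n).map (fun m => t.get (Fin.cast h.symm m)) = t := by
  subst h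
  exact List.map_get_finRange t

theorem list_toFinset_map {α' β' : Type*} [DecidableEq α'] [DecidableEq β'] (l : List α')
    (f : α' → β') : (l.map f).toFinset = l.toFinset.image f := by
  ext b; simp

-- ===================== auxiliary development =====================

section AuxDev
variable {n : ℕ} {G : Type*} [Group G]

theorem wreath_mul_fst (w u : Wreath n G) (m : Fin n) : (w * u).1 m = w.1 (u.1 m) := rfl
theorem wreath_mul_snd (w u : Wreath n G) (m : Fin n) : (w * u).2 m = w.2 (u.1 m) * u.2 m := rfl
theorem wreath_one_fst (m : Fin n) : (1 : Wreath n G).1 m = m := rfl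

/-- The blocks of `Phi`: group `l` into chunks of sizes given by `α`, map by `f`. -/
def PhiAux (f : Fin n → Fin n) : List (ℕ × G) → List (Fin n) → OGP n G
  | [], _ => []
  | p :: α, l => ((((l.take p.1).map f).toFinset : Finset (Fin n)), p.2) :: PhiAux f α (l.drop p.1)

def Phi (w : Wreath n G) (α : List (ℕ × G)) (u : Wreath n G) : OGP n G :=
  PhiAux (fun m => w.1 (u.1 m)) α (List.finRange n)

theorem typeOGP_PhiAux {f : Fin n → Fin n} (hf : Function.Injective f) :
    ∀ (α : List (ℕ × G)) (l : List (Fin n)), l.Nodup → (α.map Prod.fst).sum ≤ l.length →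
      typeOGP (PhiAux f α l) = α
  | [], l, _, _ => rfl
  | p :: α, l, hnd, hlen => by
    simp only [map_cons, sum_cons] at hlen
    have ha : p.1 ≤ l.length := le_trans (Nat.le_add_right _ _) hlen
    have h1 : ((l.take p.1).map f).toFinset.card = p.1 := by
      rw [List.toFinset_card_of_nodup ((hnd.sublist (take_sublist _ _)).map hf)]
      simp [Nat.min_eq_left ha]
    have h2 := typeOGP_PhiAux hf α (l.drop p.1) (hnd.sublist (drop_sublist _ _))
      (by simp only [length_drop]; omega)
    simp only [PhiAux, typeOGP, map_cons] at *
    rw [h1, h2]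

theorem PhiAux_block_subset {f : Fin n → Fin n} :
    ∀ (α : List (ℕ × G)) (l : List (Fin n)), ∀ q ∈ PhiAux f α l, q.1 ⊆ (l.map f).toFinset
  | [], l, q, hq => by simp [PhiAux] at hq
  | p :: α, l, q, hq => by
    rcases (by simpa [PhiAux] using hq :
        q = (((l.take p.1).map f).toFinset, p.2) ∨ q ∈ PhiAux f α (l.drop p.1)) with h | h
    · subst h
      intro x hx
      rw [List.mem_toFinset] at *
      exact ((take_sublist p.1 l).map f).subset hx
    · intro x hx
      have := PhiAux_block_subset α (l.drop p.1) q h hx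
      rw [List.mem_toFinset] at *
      exact ((drop_sublist p.1 l).map f).subset this

theorem PhiAux_pairwise {f : Fin n → Fin n} (hf : Function.Injective f) :
    ∀ (α : List (ℕ × G)) (l : List (Fin n)), l.Nodup →
      (PhiAux f α l).Pairwise (fun p q => _root_.Disjoint p.1 q.1)
  | [], l, _ => List.Pairwise.nil
  | p :: α, l, hnd => by
    refine List.Pairwise.cons ?_ (PhiAux_pairwise hf α _ (hnd.sublist (drop_sublist _ _)))
    intro q hq
    have hsub := PhiAux_block_subset α (l.drop p.1) q hq
    refine Finset.disjoint_left.2 fun {x} hx1 hx2 => ?_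
    have hx2' := hsub hx2
    rw [List.mem_toFinset] at hx1 hx2'
    have hmnd : (l.map f).Nodup := hnd.map hf
    rw [← take_append_drop p.1 l, map_append] at hmnd
    exact (List.disjoint_of_nodup_append hmnd) hx1 hx2'

theorem PhiAux_foldr_union (f : Fin n → Fin n) :
    ∀ (α : List (ℕ × G)) (l : List (Fin n)),
      (PhiAux f α l).foldr (fun p s => p.1 ∪ s) ∅
        = ((l.take (α.map Prod.fst).sum).map f).toFinset
  | [], l => by simp [PhiAux]
  | p :: α, l => by
    simp only [PhiAux, foldr_cons, PhiAux_foldr_union f α (l.drop p.1)]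
    rw [← List.toFinset_append, ← map_append, map_cons, sum_cons, take_add]

theorem map_finRange_toFinset {f : Fin n → Fin n} (hf : Function.Injective f) :
    ((List.finRange n).map f).toFinset = Finset.univ := by
  apply Finset.eq_univ_of_card
  rw [List.toFinset_card_of_nodup ((List.nodup_finRange n).map hf)]
  simp

theorem PhiAux_isOGP {f : Fin n → Fin n} (hf : Function.Injective f) (α : List (ℕ × G))
    (hα : IsGComp n α) : IsOGP (PhiAux f α (List.finRange n)) := by
  have hnd := List.nodup_finRange n
  have hlen : (α.map Prod.fst).sum ≤ (List.finRange n).length := by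
    simp [hα.2]
  refine ⟨?_, PhiAux_pairwise hf α _ hnd, ?_⟩
  · intro q hq
    have : (q.1.card, q.2) ∈ typeOGP (PhiAux f α (List.finRange n)) := by
      simp only [typeOGP, List.mem_map]
      exact ⟨q, hq, rfl⟩
    rw [typeOGP_PhiAux hf α _ hnd hlen] at this
    have := hα.1 _ this
    exact Finset.card_pos.1 this
  · rw [PhiAux_foldr_union, hα.2]
    rw [List.take_of_length_le (by simp)]
    exact map_finRange_toFinset hf

theorem filterMap_iota {w : Wreath n G} (B : Finset (Fin n)) (v : List (Fin n))
    (hv : v.Pairwise (· < ·)) (hB : ∀ i, w.1 i ∈ B ↔ i ∈ v) (g : G) :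
    (_root_.iota w).filterMap
        (fun ch => if (B ∩ ch.1).Nonempty then some (B ∩ ch.1, ch.2 * g) else none)
      = v.map (fun i => (({w.1 i} : Finset (Fin n)), w.2 i * g)) := by
  rw [_root_.iota, List.filterMap_map]
  rw [List.filterMap_congr (g := fun i =>
      if i ∈ v then some ((({w.1 i} : Finset (Fin n)), w.2 i * g)) else none) ?_]
  · rw [filterMap_ite_eq_filter_map (· ∈ v) _ _, filter_finRange_mem v hv]
  · intro i _
    by_cases h : i ∈ v
    · have hmem : w.1 i ∈ B := (hB i).2 h
      simp only [Function.comp_apply]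
      rw [Finset.inter_singleton_of_mem hmem]
      simp [h]
    · have hmem : w.1 i ∉ B := fun hc => h ((hB i).1 hc)
      simp only [Function.comp_apply]
      rw [Finset.inter_singleton_of_notMem hmem]
      simp [h]

theorem mulOGP_PhiAux (w u : Wreath n G) :
    ∀ (α : List (ℕ × G)) (l : List (Fin n)),
      Forall₂ (fun t p => (t.map u.1).Pairwise (· < ·) ∧ ∀ m ∈ t, u.2 m = p.2)
        (chunks (α.map Prod.fst) l) α →
      mulOGP (PhiAux (fun m => w.1 (u.1 m)) α l) (_root_.iota w)
        = (l.take (α.map Prod.fst).sum).map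
            (fun m => (({w.1 (u.1 m)} : Finset (Fin n)), w.2 (u.1 m) * u.2 m))
  | [], l, _ => by simp [PhiAux, mulOGP]
  | p :: α, l, h => by
    simp only [map_cons, sum_cons, chunks] at h ⊢
    rcases h with _ | ⟨⟨hsort, hlab⟩, htail⟩
    show (_root_.iota w).filterMap _ ++ mulOGP (PhiAux _ α (l.drop p.1)) (_root_.iota w) = _
    rw [mulOGP_PhiAux w u α _ htail]
    rw [filterMap_iota (((l.take p.1).map (fun m => w.1 (u.1 m))).toFinset)
        ((l.take p.1).map u.1) hsort ?_ p.2]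
    · rw [take_add, map_append, map_map]
      congr 1
      refine List.map_congr_left fun m hm => ?_
      simp [hlab m hm]
    · intro i
      rw [List.mem_toFinset]
      constructor
      · intro hi
        rw [show ((l.take p.1).map fun m => w.1 (u.1 m)) = ((l.take p.1).map u.1).map w.1 by
          rw [map_map]; rfl] at hi
        obtain ⟨x, hx, he⟩ := List.mem_map.1 hi
        exact (w.1.injective he) ▸ hx
      · intro hi
        rw [show ((l.take p.1).map fun m => w.1 (u.1 m)) = ((l.take p.1).map u.1).map w.1 by
          rw [map_map]; rfl]
        exact List.mem_map_of_mem (f := w.1) hi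

/-- `u` is "good" for `α`: on each chunk of indices, `u.1` is increasing and `u.2` is
the color of `α`. -/
def Good (u : Wreath n G) (α : List (ℕ × G)) : Prop :=
  Forall₂ (fun t p => (t.map u.1).Pairwise (· < ·) ∧ ∀ m ∈ t, u.2 m = p.2)
    (chunks (α.map Prod.fst) (List.finRange n)) α

theorem mulOGP_Phi (w u : Wreath n G) (α : List (ℕ × G)) (hα : IsGComp n α)
    (hGood : Good u α) : mulOGP (Phi w α u) (_root_.iota w) = _root_.iota (w * u) := by
  rw [Phi, mulOGP_PhiAux w u α _ hGood, hα.2,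
    List.take_of_length_le (by simp), _root_.iota]
  refine List.map_congr_left fun m _ => ?_
  rw [wreath_mul_fst, wreath_mul_snd]

theorem sorted_chain'_iff (t : List (Fin n)) (f : Fin n → Fin n) :
    Chain' (· < ·) (t.map (fun i => ((f i : ℕ)))) ↔ (t.map f).Pairwise (· < ·) := by
  rw [show (t.map (fun i => ((f i : ℕ)))) = (t.map f).map (fun x : Fin n => (x : ℕ)) by
    rw [map_map]; rfl]
  unfold List.Chain'
  rw [List.isChain_map, ← List.isChain_iff_pairwise]
  constructor
  · exact fun h => h.imp fun {a b} hab => hab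
  · exact fun h => h.imp fun {a b} hab => hab

theorem word_map (u : Wreath n G) :
    wordOf u = (List.finRange n).map (fun i => ((u.1 i : ℕ), u.2 i)) := rfl

theorem good_of_fits {u : Wreath n G} {α : List (ℕ × G)} (h : Fits u α) : Good u α := by
  obtain ⟨ss, hfl, hf2⟩ := h
  have hlens : ss.map length = α.map Prod.fst := by
    clear hfl
    induction hf2 with
    | nil => rfl
    | cons hr _ ih => simp only [map_cons, ih, hr.1]
  have hss : ss = chunks (α.map Prod.fst) (wordOf u) := by
    rw [← hlens, ← hfl, chunks_of_flatten]
  rw [hss, word_map, chunks_map] at hf2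
  rw [Good]
  have h2 := List.forall₂_map_left_iff.1 hf2
  refine h2.imp fun {t p} hp => ?_
  obtain ⟨-, hch, hlab⟩ := hp
  constructor
  · rw [show (t.map fun i => ((u.1 i : ℕ), u.2 i)).map Prod.fst
        = t.map (fun i => ((u.1 i : ℕ))) by rw [map_map]; rfl] at hch
    exact (sorted_chain'_iff t u.1).1 hch
  · intro m hm
    exact hlab _ (List.mem_map_of_mem hm)

theorem fits_of_good {u : Wreath n G} {α : List (ℕ × G)} (hα : IsGComp n α)
    (h : Good u α) : Fits u α := by
  refine ⟨chunks (α.map Prod.fst) (wordOf u),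
    chunks_flatten _ _ (by rw [hα.2, word_map]; simp), ?_⟩
  rw [word_map, chunks_map]
  rw [List.forall₂_map_left_iff]
  have hlen := chunks_forall₂_length (α.map Prod.fst) (List.finRange n) (by simp [hα.2])
  have hlen' := List.forall₂_map_right_iff.1 hlen
  refine (forall₂_and' hlen' h).imp fun {t p} hp => ?_
  obtain ⟨hl, hsort, hlab⟩ := hp
  refine ⟨by simpa using hl, ?_, ?_⟩
  · rw [show (t.map fun i => ((u.1 i : ℕ), u.2 i)).map Prod.fst
        = t.map (fun i => ((u.1 i : ℕ))) by rw [map_map]; rfl]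
    exact (sorted_chain'_iff t u.1).2 hsort
  · intro q hq
    obtain ⟨m, hm, rfl⟩ := List.mem_map.1 hq
    exact hlab m hm

theorem iota_injective : Function.Injective (_root_.iota : Wreath n G → OGP n G) := by
  intro u u' h
  have h2 : ∀ i ∈ List.finRange n,
      (({u.1 i} : Finset (Fin n)), u.2 i) = (({u'.1 i} : Finset (Fin n)), u'.2 i) := by
    rw [← List.map_inj_left]
    exact h
  have h3 : ∀ i, u.1 i = u'.1 i ∧ u.2 i = u'.2 i := by
    intro i
    have := h2 i (List.mem_finRange i)
    rw [Prod.mk.injEq, Finset.singleton_inj] at this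
    exact this
  refine Prod.ext (Equiv.ext fun i => (h3 i).1) (funext fun i => (h3 i).2)

theorem PhiAux_eq {f : Fin n → Fin n} :
    ∀ (α : List (ℕ × G)) (l : List (Fin n)) (P : OGP n G),
      Forall₂ (fun t q => (t.map f).toFinset = q.1) (chunks (α.map Prod.fst) l) P →
      α.map Prod.snd = P.map Prod.snd →
      PhiAux f α l = P
  | [], l, P, h1, _ => by
    have : P = [] := List.forall₂_nil_left_iff.1 h1
    rw [this]; rfl
  | p :: α, l, [], h1, h2 => by
    simp only [map_cons, chunks] at h1
    cases h1
  | p :: α, l, q :: P', h1, h2 => by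
    simp only [map_cons, chunks] at h1
    rcases h1 with _ | ⟨hq, htail⟩
    simp only [map_cons, List.cons.injEq] at h2
    show (((l.take p.1).map f).toFinset, p.2) :: PhiAux f α (l.drop p.1) = q :: P'
    rw [PhiAux_eq α (l.drop p.1) P' htail h2.2, hq, h2.1]

theorem exists_good_phi_eq (v : Wreath n G) (α : List (ℕ × G)) (hα : IsGComp n α)
    (P : OGP n G) (hP : IsOGP P) (hT : typeOGP P = α) :
    ∃ u : Wreath n G, Good u α ∧ Phi v α u = P := by
  classical
  set ls : List (List (Fin n)) :=
    P.map (fun p => Finset.sort (p.1.image v.1.symm) (· ≤ ·)) with hls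
  set gls : List (List G) := P.map (fun p => List.replicate p.1.card p.2) with hgls
  have hcard : ∀ p : Finset (Fin n) × G, (p.1.image v.1.symm).card = p.1.card :=
    fun p => Finset.card_image_of_injective _ v.1.symm.injective
  have hls_len : ls.map length = α.map Prod.fst := by
    rw [← hT, hls]
    simp only [map_map, typeOGP]
    refine List.map_congr_left fun p _ => ?_
    simp [Finset.length_sort, hcard]
  have hgls_len : gls.map length = α.map Prod.fst := by
    rw [← hT, hgls]
    simp only [map_map, typeOGP]
    refine List.map_congr_left fun p _ => ?_
    simp
  have hflat_len : ls.flatten.length = n := by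
    rw [List.length_flatten, hls_len, hα.2]
  have hgflat_len : gls.flatten.length = n := by
    rw [List.length_flatten, hgls_len, hα.2]
  have ht_nd : ls.flatten.Nodup := by
    rw [List.nodup_flatten]
    constructor
    · intro l' hl'
      obtain ⟨p, _, rfl⟩ := List.mem_map.1 hl'
      exact Finset.sort_nodup _ _
    · rw [hls, List.pairwise_map]
      refine hP.2.1.imp fun {p q} hpq => ?_
      intro x hx1 hx2
      rw [Finset.mem_sort] at hx1 hx2
      exact Finset.disjoint_left.1 ((Finset.disjoint_image v.1.symm.injective).2 hpq) hx1 hx2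
  have hinj : Function.Injective (fun m : Fin n => ls.flatten.get (Fin.cast hflat_len.symm m)) :=
    fun a b hab => Fin.cast_injective _ (List.nodup_iff_injective_get.1 ht_nd hab)
  have hbij := Finite.injective_iff_bijective.1 hinj
  set u : Wreath n G :=
    ((Equiv.ofBijective _ hbij : Equiv.Perm (Fin n)),
      fun m : Fin n => gls.flatten.get (Fin.cast hgflat_len.symm m)) with hu
  have hmap1 : (List.finRange n).map u.1 = ls.flatten := by
    rw [show (List.finRange n).map u.1
        = (List.finRange n).map (fun m => ls.flatten.get (Fin.cast hflat_len.symm m)) from rfl]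
    exact map_get_cast_finRange ls.flatten hflat_len
  have hmap2 : (List.finRange n).map u.2 = gls.flatten :=
    map_get_cast_finRange gls.flatten hgflat_len
  have hcs1 : (chunks (α.map Prod.fst) (List.finRange n)).map (List.map u.1) = ls := by
    rw [← chunks_map, hmap1, ← hls_len, chunks_of_flatten]
  have hcs2 : (chunks (α.map Prod.fst) (List.finRange n)).map (List.map u.2) = gls := by
    rw [← chunks_map, hmap2, ← hgls_len, chunks_of_flatten]
  have F1 : Forall₂ (fun c p => c.map u.1 = Finset.sort (p.1.image v.1.symm) (· ≤ ·))
      (chunks (α.map Prod.fst) (List.finRange n)) P := by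
    have := List.forall₂_map_left_iff.1 (List.forall₂_eq_eq_eq ▸ hcs1)
    rw [hls] at this
    exact List.forall₂_map_right_iff.1 this
  have F2 : Forall₂ (fun c p => c.map u.2 = List.replicate p.1.card p.2)
      (chunks (α.map Prod.fst) (List.finRange n)) P := by
    have := List.forall₂_map_left_iff.1 (List.forall₂_eq_eq_eq ▸ hcs2)
    rw [hgls] at this
    exact List.forall₂_map_right_iff.1 this
  refine ⟨u, ?_, ?_⟩
  · rw [Good, ← hT]
    rw [show typeOGP P = P.map (fun p => (p.1.card, p.2)) from rfl]
    rw [List.forall₂_map_right_iff,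
      show List.map Prod.fst (P.map (fun p => (p.1.card, p.2))) = α.map Prod.fst from by
        rw [← hT]; rfl]
    refine (forall₂_and' F1 F2).imp fun {c p} hp => ?_
    refine ⟨?_, ?_⟩
    · rw [hp.1]; exact (Finset.sortedLT_sort _).pairwise
    · intro m hm
      have : u.2 m ∈ c.map u.2 := List.mem_map_of_mem (f := u.2) hm
      rw [hp.2] at this
      exact List.eq_of_mem_replicate this
  · refine PhiAux_eq α (List.finRange n) P ?_ ?_
    · refine F1.imp fun {c p} hp => ?_
      rw [show c.map (fun m => v.1 (u.1 m)) = (c.map u.1).map v.1 by rw [map_map]; rfl]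
      rw [hp, list_toFinset_map, Finset.sort_toFinset, Finset.image_image]
      ext x
      simp
    · rw [← hT]
      simp [typeOGP, map_map]

end AuxDev
end MyAuxAll
/-- under the identification `ι` of the singleton-block ordered
`G`-partitions with `G ≀ S_n`, left multiplication by `σ_α` satisfies
`σ_α · v = v * (σ_α · I)` for every `v ∈ G ≀ S_n`; in particular `σ_α · I = X_α`. -/
theorem sigmaA_action_eq_right_mul {n : ℕ} {G : Type*} [Group G] [Fintype G]
    (α : List (ℕ × G)) (hα : IsGComp n α) :
    (∀ v : Wreath n G,
        sigmaA (n := n) α * MonoidAlgebra.single (iota v) (1 : ℤ) =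
          MonoidAlgebra.mapDomain iota (MonoidAlgebra.single v (1 : ℤ) * Xw (n := n) α)) ∧
      sigmaA (n := n) α * MonoidAlgebra.single (iota (1 : Wreath n G)) (1 : ℤ) =
        MonoidAlgebra.mapDomain iota (Xw (n := n) α) := by
  have key : ∀ v : Wreath n G,
      sigmaA (n := n) α * MonoidAlgebra.single (iota v) (1 : ℤ) =
        MonoidAlgebra.mapDomain iota (MonoidAlgebra.single v (1 : ℤ) * Xw (n := n) α) := by
    intro v
    haveI : Finite (Wreath n G) := inferInstanceAs (Finite (Equiv.Perm (Fin n) × (Fin n → G)))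
    have hTfin : {u : Wreath n G | Fits u α}.Finite := Set.toFinite _
    have hbij : Set.BijOn (fun u => Phi v α u) {u : Wreath n G | Fits u α}
        {P : OGP n G | IsOGP P ∧ typeOGP P = α} := by
      have hfinj : ∀ u : Wreath n G, Function.Injective (fun m => v.1 (u.1 m)) :=
        fun u a b hab => u.1.injective (v.1.injective hab)
      refine ⟨fun u hu => ?_, fun u hu u' hu' h => ?_, fun P hP => ?_⟩
      · exact ⟨PhiAux_isOGP (hfinj u) α hα,
          typeOGP_PhiAux (hfinj u) α _ (List.nodup_finRange n) (by simp [hα.2])⟩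
      · have e1 := mulOGP_Phi v u α hα (good_of_fits hu)
        have e2 := mulOGP_Phi v u' α hα (good_of_fits hu')
        rw [show Phi v α u = Phi v α u' from h] at e1
        exact mul_left_cancel (iota_injective (e1.symm.trans e2))
      · obtain ⟨u, hg, he⟩ := exists_good_phi_eq v α hα P hP.1 hP.2
        exact ⟨u, fits_of_good hα hg, he⟩
    have hsig : sigmaA (n := n) α
        = ∑ u ∈ hTfin.toFinset, MonoidAlgebra.single (Phi v α u) (1 : ℤ) := by
      rw [sigmaA, ← finsum_mem_eq_of_bijOn _ hbij (fun x _ => rfl),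
        ← finsum_mem_coe_finset, Set.Finite.coe_toFinset hTfin]
    have hX : Xw (n := n) α = ∑ u ∈ hTfin.toFinset, MonoidAlgebra.single u (1 : ℤ) := by
      rw [Xw, ← finsum_mem_coe_finset, Set.Finite.coe_toFinset hTfin]
    have hms : ∀ (s : Finset (Wreath n G)) (f : Wreath n G → MonoidAlgebra ℤ (Wreath n G)),
        MonoidAlgebra.mapDomain iota (∑ u ∈ s, f u) = ∑ u ∈ s, MonoidAlgebra.mapDomain iota (f u) :=
      fun s f => map_sum (MonoidAlgebra.mapDomainLinearMap ℤ ℤ iota) f s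
    rw [hsig, hX, Finset.sum_mul, Finset.mul_sum, hms]
    refine Finset.sum_congr rfl fun u hu => ?_
    have hu' : Fits u α := by
      rw [Set.Finite.mem_toFinset] at hu; exact hu
    rw [MonoidAlgebra.single_mul_single, MonoidAlgebra.single_mul_single, one_mul,
      MonoidAlgebra.mapDomain_single]
    congr 1
    exact mulOGP_Phi v u α hα (good_of_fits hu')
  refine ⟨key, ?_⟩
  rw [key 1]
  congr 1
  rw [← MonoidAlgebra.one_def, one_mul]
end
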